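/- arXiv:2503.02458 — 5 statements merged into one kernel-verified Lean document; each statement's English description precedes it below -/
import Mathlib

section
/- Let k be a field of characteristic 0 and let R be a nontrivial commutative k-algebra. Let P ∈ k[x] be a univariate polynomial, and let Q, r ∈ R with r not a zero divisor in R. Write P̃ ∈ R[x] for the image of P under the canonical ring map k[x] → R[x]. Suppose that in R[x] one has P̃(x + r) = P̃(x) + Q, i.e., the composition of P̃ with the polynomial x + C(r) equals P̃ + C(Q). Then there exist Q', α ∈ R such that Q = r·Q' and P̃ = Q'·x + α. In particular P has degree at most 1, Q' is the image in R of the coefficient of x in P, and α is the image in R of the constant coefficient of P. -/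
open Polynomial

/-- Lemma 2.4 of the paper.
Let `k` be a field of characteristic 0 and `R` a nontrivial commutative `k`-algebra.
Let `P ∈ k[x]`, let `Q, r ∈ R` with `r` not a zero divisor, and let `P̃` be the image
of `P` in `R[x]`. If `P̃(x + r) = P̃(x) + Q` then there are `Q', α ∈ R` with `Q = r·Q'`
and `P̃ = Q'·x + α`; in particular `P` has degree at most 1, `Q'` is the image of the
coefficient of `x` in `P`, and `α` is the image of the constant coefficient of `P`. -/
theorem statement0 {k R : Type*} [Field k] [CharZero k] [CommRing R] [Nontrivial R]
    [Algebra k R] (P : Polynomial k) (Q r : R)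
    (hr : ∀ s : R, r * s = 0 → s = 0)
    (h : (P.map (algebraMap k R)).comp (X + C r) = P.map (algebraMap k R) + C Q) :
    ∃ Q' α : R, Q = r * Q' ∧ P.map (algebraMap k R) = C Q' * X + C α ∧
      P.degree ≤ 1 ∧ Q' = algebraMap k R (P.coeff 1) ∧ α = algebraMap k R (P.coeff 0) := by
  have hinj : Function.Injective (algebraMap k R) := (algebraMap k R).injective
  set f : Polynomial R := P.map (algebraMap k R) with hf
  have hdeg : P.degree ≤ 1 := by
    by_contra hd
    have hd2 : 2 ≤ P.natDegree := by
      by_contra hd2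
      exact hd (degree_le_of_natDegree_le (n := 1) (by omega))
    have hP0 : P ≠ 0 := fun h0 => by simp [h0] at hd2
    set d := P.natDegree with hdd
    have hfd : f.natDegree = d := natDegree_map_eq_of_injective hinj P
    -- take the coefficient at d - 1 of h
    have hco := congrArg (fun p => Polynomial.coeff p (d - 1)) h
    simp only [← taylor_apply, coeff_add, coeff_C, if_neg (by omega : ¬ d - 1 = 0),
      add_zero, taylor_coeff] at hco
    -- evaluate the Hasse derivative, which has degree ≤ 1
    set g : Polynomial R := hasseDeriv (d - 1) f with hg
    have hgdeg : g.natDegree < 2 := by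
      rw [hg]
      have := natDegree_hasseDeriv_le f (d - 1)
      omega
    rw [eval_eq_sum_range' hgdeg] at hco
    have hg0 : g.coeff 0 = f.coeff (d - 1) := by
      rw [hg, hasseDeriv_coeff]; simp
    have hg1 : g.coeff 1 = (d : R) * f.coeff d := by
      rw [hg, hasseDeriv_coeff]
      have h1 : 1 + (d - 1) = d := by omega
      rw [h1]
      congr 1
      have : d.choose (d - 1) = d.choose 1 := by
        rw [← Nat.choose_symm (by omega : d - 1 ≤ d)]
        congr 1; omega
      rw [this, Nat.choose_one_right]
    rw [Finset.sum_range_succ, Finset.sum_range_one, hg0, hg1] at hco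
    simp only [pow_zero, mul_one, pow_one] at hco
    have hzero : r * ((d : R) * f.coeff d) = 0 := by
      have : (d : R) * f.coeff d * r = 0 := by linear_combination hco
      linear_combination this
    have := hr _ hzero
    have hcoeff : f.coeff d = algebraMap k R (P.coeff d) := coeff_map _ _
    have hnat : (d : R) = algebraMap k R (d : k) := by
      simp [map_natCast]
    rw [hnat, hcoeff, ← map_mul] at this
    have : (d : k) * P.coeff d = 0 := by
      apply hinj
      simpa using this
    have hlc : P.coeff d ≠ 0 := by
      rw [hdd]
      exact mt leadingCoeff_eq_zero.mp hP0
    have hdk : (d : k) ≠ 0 := Nat.cast_ne_zero.mpr (by omega)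
    exact hlc ((mul_eq_zero.mp this).resolve_left hdk)
  -- now P has degree ≤ 1
  have hfdeg : f.degree ≤ 1 := le_trans degree_map_le hdeg
  set a := f.coeff 1 with ha
  set b := f.coeff 0 with hb
  have hfeq : f = C a * X + C b := eq_X_add_C_of_degree_le_one hfdeg
  have hcomp : f.comp (X + C r) = f + C (a * r) := by
    rw [hfeq]
    simp only [add_comp, mul_comp, C_comp, X_comp, map_mul]
    ring
  rw [hcomp] at h
  have hQ : a * r = Q := C_injective (add_left_cancel h)
  exact ⟨a, b, by rw [← hQ]; ring, hfeq, hdeg, by rw [ha, hf, coeff_map],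
    by rw [hb, hf, coeff_map]⟩
end

section
/- Let k be an algebraically closed field of characteristic 0, let n ≥ 1 and 0 ≤ r ≤ n−1. Let λ_0 = 1, let λ_1, …, λ_r ∈ k be roots of unity, and let λ_{r+1}, …, λ_n ∈ k be nonzero and multiplicatively independent. Let σ be the k-algebra automorphism of the polynomial ring k[x_0, …, x_n] determined by σ(x_i) = λ_i·x_i for all 0 ≤ i ≤ n. Fix d ≥ 0 and let W be a k-linear subspace of the space of homogeneous polynomials of degree d in k[x_0, …, x_n] such that σ(W) ⊆ W. Then there exist finitely many polynomials P_1, …, P_m ∈ k[x_0, …, x_r] (polynomials involving only the variables x_0, …, x_r) and monomials Q_1, …, Q_m in the variables x_{r+1}, …, x_n such that W is the k-linear span of P_1·Q_1, …, P_m·Q_m. -/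
open MvPolynomial


open Polynomial in
lemma aux_vandermonde {k V ι : Type*} [Field k] [AddCommGroup V] [Module k V] [DecidableEq ι]
    (W : Submodule k V) (S : Finset ι) (c : ι → k) (hc : Set.InjOn c S)
    (v : ι → V) (h : ∀ m : ℕ, (∑ i ∈ S, c i ^ m • v i) ∈ W) :
    ∀ i ∈ S, v i ∈ W := by
  intro i hi
  set p := Lagrange.basis S c i with hp
  have hvi : v i = ∑ j ∈ S, (p.eval (c j)) • v j := by
    rw [Finset.sum_congr rfl (g := fun j => if j = i then v j else 0)]
    · simp [Finset.sum_ite_eq' S i, hi]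
    · intro j hj
      by_cases hji : j = i
      · subst hji; rw [Lagrange.eval_basis_self hc hj, one_smul, if_pos rfl]
      · rw [Lagrange.eval_basis_of_ne (Ne.symm hji) hj, zero_smul, if_neg hji]
  have hev : ∀ j, p.eval (c j) = ∑ m ∈ Finset.range (p.natDegree + 1), p.coeff m * c j ^ m := by
    intro j; rw [Polynomial.eval_eq_sum_range]
  rw [hvi]
  have : ∑ j ∈ S, (p.eval (c j)) • v j
      = ∑ m ∈ Finset.range (p.natDegree + 1), p.coeff m • ∑ j ∈ S, c j ^ m • v j := by
    simp_rw [hev, Finset.sum_smul, Finset.smul_sum, smul_smul]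
    rw [Finset.sum_comm]
  rw [this]
  exact Submodule.sum_mem _ fun m _ => Submodule.smul_mem _ _ (h m)

lemma aux_sigma_monomial {k : Type*} [CommSemiring k] {n : ℕ}
    (lam : Fin (n + 1) → k)
    (σ : MvPolynomial (Fin (n + 1)) k →ₐ[k] MvPolynomial (Fin (n + 1)) k)
    (hσ : ∀ i : Fin (n + 1), σ (X i) = lam i • X i)
    (a : Fin (n+1) →₀ ℕ) (c : k) :
    σ (monomial a c) = (∏ i, lam i ^ a i) • monomial a c := by
  rw [monomial_eq, map_mul, algHom_C]
  have : σ (a.prod fun i e => X i ^ e) = (∏ i, lam i ^ a i) • (a.prod fun i e => X i ^ e) := by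
    rw [Finsupp.prod, map_prod]
    have h1 : ∀ i ∈ a.support, σ (X i ^ a i) = C (lam i ^ a i) * X i ^ a i := by
      intro i _
      rw [map_pow, hσ, smul_pow, smul_eq_C_mul]
    rw [Finset.prod_congr rfl h1, Finset.prod_mul_distrib, ← map_prod, smul_eq_C_mul]
    congr 2
    rw [← Finset.prod_subset (Finset.subset_univ a.support)]
    intro i _ hi
    rw [Finsupp.notMem_support_iff.mp hi, pow_zero]
  rw [this, mul_smul_comm]; rfl

/-- Lemma 2.3 of the paper.
Let `k` be algebraically closed of characteristic 0, `n ≥ 1`, `0 ≤ r ≤ n - 1`.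
Let `λ 0 = 1`, let `λ 1, …, λ r` be roots of unity and `λ (r+1), …, λ n` be nonzero and
multiplicatively independent.  Let `σ` be the `k`-algebra automorphism of
`k[x_0, …, x_n]` with `σ (x i) = λ i • x i`.  If `W` is a `σ`-invariant subspace of the
space of degree-`d` homogeneous polynomials, then `W` is spanned by finitely many
products `P i * Q i` where each `P i` involves only `x_0, …, x_r` and each `Q i` is a
monomial in `x_(r+1), …, x_n`. -/
theorem statement1 {k : Type*} [Field k] [CharZero k] [IsAlgClosed k]
    (n r : ℕ) (hn : 1 ≤ n) (hr : r ≤ n - 1)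
    (lam : Fin (n + 1) → k) (hlam0 : lam 0 = 1)
    (hroots : ∀ i : Fin (n + 1), 1 ≤ (i : ℕ) → (i : ℕ) ≤ r → ∃ N : ℕ, 1 ≤ N ∧ lam i ^ N = 1)
    (hne : ∀ i : Fin (n + 1), r < (i : ℕ) → lam i ≠ 0)
    (hindep : ∀ c : Fin (n + 1) → ℤ,
      (∏ i ∈ Finset.univ.filter (fun i : Fin (n + 1) => r < (i : ℕ)), lam i ^ c i) = 1 →
      ∀ i : Fin (n + 1), r < (i : ℕ) → c i = 0)
    (σ : MvPolynomial (Fin (n + 1)) k →ₐ[k] MvPolynomial (Fin (n + 1)) k)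
    (hσ : ∀ i : Fin (n + 1), σ (X i) = lam i • X i)
    (d : ℕ) (W : Submodule k (MvPolynomial (Fin (n + 1)) k))
    (hWd : W ≤ homogeneousSubmodule (Fin (n + 1)) k d)
    (hWinv : ∀ p ∈ W, σ p ∈ W) :
    ∃ (m : ℕ) (P Q : Fin m → MvPolynomial (Fin (n + 1)) k),
      (∀ i, ∀ j ∈ (P i).vars, (j : ℕ) ≤ r) ∧
      (∀ i, ∃ a : Fin (n + 1) →₀ ℕ,
        (∀ j : Fin (n + 1), a j ≠ 0 → r < (j : ℕ)) ∧ Q i = monomial a 1) ∧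
      W = Submodule.span k (Set.range fun i => P i * Q i) := by
  classical
  set R := MvPolynomial (Fin (n + 1)) k
  set L : R →ₗ[k] R := σ.toLinearMap with hL
  set χ : (Fin (n+1) →₀ ℕ) → k := fun a => ∏ i, lam i ^ a i with hχ
  have hNex : ∀ i : Fin (n+1), ∃ N : ℕ, 1 ≤ N ∧ ((i:ℕ) ≤ r → lam i ^ N = 1) := by
    intro i
    by_cases h1 : 1 ≤ (i:ℕ)
    · by_cases h2 : (i:ℕ) ≤ r
      · obtain ⟨N, hN1, hN⟩ := hroots i h1 h2; exact ⟨N, hN1, fun _ => hN⟩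
      · exact ⟨1, le_refl _, fun h => absurd h h2⟩
    · have hi0 : i = 0 := by
        have : (i:ℕ) = 0 := by omega
        exact Fin.ext (by simpa using this)
      exact ⟨1, le_refl _, fun _ => by rw [hi0, hlam0, pow_one]⟩
  choose f hf1 hf2 using hNex
  set N : ℕ := ∏ i, f i with hNdef
  have hN1 : 1 ≤ N := Finset.one_le_prod' fun i _ => hf1 i
  have hNr : ∀ i : Fin (n+1), (i:ℕ) ≤ r → lam i ^ N = 1 := by
    intro i hi
    obtain ⟨c, hc⟩ := Finset.dvd_prod_of_mem f (Finset.mem_univ i)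
    rw [hNdef, hc, pow_mul, hf2 i hi, one_pow]
  have hlamNne : ∀ i : Fin (n+1), lam i ^ N ≠ 0 := by
    intro i
    by_cases hi : (i:ℕ) ≤ r
    · rw [hNr i hi]; exact one_ne_zero
    · exact pow_ne_zero _ (hne i (by omega))
  -- tail and head of an exponent vector
  set head : (Fin (n+1) →₀ ℕ) → (Fin (n+1) →₀ ℕ) :=
    fun a => a.filter (fun i => (i:ℕ) ≤ r) with hhead
  set tail : (Fin (n+1) →₀ ℕ) → (Fin (n+1) →₀ ℕ) :=
    fun a => a.filter (fun i => ¬ (i:ℕ) ≤ r) with htail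
  have hht : ∀ a, head a + tail a = a := fun a =>
    Finsupp.filter_pos_add_filter_neg a _
  have htailapp : ∀ a j, tail a j = if (j:ℕ) ≤ r then 0 else a j := by
    intro a j
    simp only [htail, Finsupp.filter_apply]
    by_cases h : (j:ℕ) ≤ r
    · rw [if_neg (by simpa using h), if_pos h]
    · rw [if_pos h, if_neg h]
  have htailprop : ∀ a, ∀ j, tail a j ≠ 0 → r < (j:ℕ) := by
    intro a j hj
    rw [htailapp] at hj
    by_contra h
    rw [if_pos (by omega)] at hj
    exact hj rfl
  set μ : (Fin (n+1) →₀ ℕ) → k := fun t => ∏ i, (lam i ^ N) ^ t i with hμ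
  have hχN : ∀ a, χ a ^ N = μ (tail a) := by
    intro a
    simp only [hχ, hμ]
    rw [← Finset.prod_pow]
    refine Finset.prod_congr rfl fun i _ => ?_
    rw [htailapp]
    by_cases hi : (i:ℕ) ≤ r
    · rw [if_pos hi, pow_zero, ← pow_mul, mul_comm, pow_mul, hNr i hi, one_pow]
    · rw [if_neg hi, ← pow_mul, ← pow_mul, mul_comm]
  -- injectivity of μ on tails
  have hμinj : ∀ t t' : Fin (n+1) →₀ ℕ, (∀ j, t j ≠ 0 → r < (j:ℕ)) →
      (∀ j, t' j ≠ 0 → r < (j:ℕ)) → μ t = μ t' → t = t' := by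
    intro t t' ht ht' h
    set Φ := Finset.univ.filter (fun i : Fin (n + 1) => r < (i : ℕ)) with hΦ
    have hμres : ∀ s : Fin (n+1) →₀ ℕ, (∀ j, s j ≠ 0 → r < (j:ℕ)) →
        μ s = ∏ i ∈ Φ, (lam i ^ N) ^ s i := by
      intro s hs
      rw [hμ]
      refine (Finset.prod_subset (Finset.filter_subset _ _) ?_).symm
      intro i _ hi
      have : s i = 0 := by
        by_contra h0
        exact hi (Finset.mem_filter.mpr ⟨Finset.mem_univ i, hs i h0⟩)
      rw [this, pow_zero]
    have hμt'ne : (∏ i ∈ Φ, (lam i ^ N) ^ t' i) ≠ 0 :=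
      Finset.prod_ne_zero_iff.mpr fun i _ => pow_ne_zero _ (hlamNne i)
    have hprod : ∏ i ∈ Φ, lam i ^ ((N * t i : ℕ) - (N * t' i : ℕ) : ℤ) = 1 := by
      have hsplit : ∀ i ∈ Φ, lam i ^ ((N * t i : ℕ) - (N * t' i : ℕ) : ℤ)
          = ((lam i ^ N) ^ t i) / ((lam i ^ N) ^ t' i) := by
        intro i hi
        have hne0 : lam i ≠ 0 := hne i (Finset.mem_filter.mp hi).2
        rw [zpow_sub₀ hne0, zpow_natCast, zpow_natCast, pow_mul, pow_mul]
      rw [Finset.prod_congr rfl hsplit, Finset.prod_div_distrib,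
        ← hμres t ht, ← hμres t' ht', h, div_self]
      rw [hμres t' ht']
      exact hμt'ne
    have hzero := hindep (fun i => ((N * t i : ℕ) - (N * t' i : ℕ) : ℤ)) hprod
    ext j
    by_cases hj : r < (j:ℕ)
    · have := hzero j hj
      have : (N : ℤ) * t j = (N : ℤ) * t' j := by push_cast at this ⊢; omega
      have hNne : (N : ℤ) ≠ 0 := by exact_mod_cast Nat.one_le_iff_ne_zero.mp hN1
      exact_mod_cast mul_left_cancel₀ hNne this
    · have h1 : t j = 0 := by by_contra h0; exact hj (ht j h0)
      have h2 : t' j = 0 := by by_contra h0; exact hj (ht' j h0)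
      rw [h1, h2]
  -- action of powers of L on monomials
  have hLmon : ∀ (m : ℕ) (a : Fin (n+1) →₀ ℕ) (c : k),
      (L ^ m) (monomial a c) = χ a ^ m • monomial a c := by
    intro m a c
    induction m with
    | zero => simp
    | succ m ih =>
      rw [pow_succ, Module.End.mul_apply]
      have hstep : L (monomial a c) = χ a • monomial a c := aux_sigma_monomial lam σ hσ a c
      rw [hstep, map_smul, ih, smul_smul, ← pow_succ']
  have hWL : ∀ (m : ℕ) (p : R), p ∈ W → (L ^ m) p ∈ W := by
    intro m
    induction m with
    | zero => intro p hp; simpa using hp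
    | succ m ih =>
      intro p hp
      rw [pow_succ, Module.End.mul_apply]
      exact ih _ (hWinv p hp)
  -- pieces
  set vpart : R → (Fin (n+1) →₀ ℕ) → R := fun w t =>
    ∑ a ∈ w.support.filter (fun a => tail a = t), monomial a (coeff a w) with hvpart
  set Ppart : R → (Fin (n+1) →₀ ℕ) → R := fun w t =>
    ∑ a ∈ w.support.filter (fun a => tail a = t), monomial (head a) (coeff a w) with hPpart
  set tails : R → Finset (Fin (n+1) →₀ ℕ) := fun w => w.support.image tail with htails
  have hdecomp : ∀ w : R, ∑ t ∈ tails w, vpart w t = w := by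
    intro w
    simp only [hvpart, htails]
    rw [Finset.sum_fiberwise_of_maps_to (fun a ha => Finset.mem_image_of_mem tail ha)]
    exact support_sum_monomial_coeff w
  have hvmul : ∀ w t, vpart w t = Ppart w t * monomial t 1 := by
    intro w t
    simp only [hvpart, hPpart]
    rw [Finset.sum_mul]
    refine Finset.sum_congr rfl fun a ha => ?_
    obtain ⟨-, hat⟩ := Finset.mem_filter.mp ha
    rw [monomial_mul, mul_one, ← hat, hht a]
  have hPvars : ∀ w t, ∀ j ∈ (Ppart w t).vars, (j:ℕ) ≤ r := by
    intro w t j hj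
    obtain ⟨e, he, hje⟩ := (mem_vars j).mp hj
    simp only [hPpart] at he
    obtain ⟨a, -, hea⟩ := Finset.mem_biUnion.mp (support_sum he)
    have : e = head a := Finset.mem_singleton.mp (support_monomial_subset hea)
    subst this
    have hne0 : head a j ≠ 0 := Finsupp.mem_support_iff.mp hje
    simp only [hhead, Finsupp.filter_apply] at hne0
    by_contra h
    rw [if_neg h] at hne0
    exact hne0 rfl
  -- eigencomponents stay in W
  have hvW : ∀ w, w ∈ W → ∀ t ∈ tails w, vpart w t ∈ W := by
    intro w hw
    refine aux_vandermonde W (tails w) μ ?_ (vpart w) ?_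
    · intro t ht t' ht' htt'
      simp only [htails, Finset.coe_image, Set.mem_image] at ht ht'
      obtain ⟨a, -, rfl⟩ := ht
      obtain ⟨a', -, rfl⟩ := ht'
      exact hμinj _ _ (htailprop a) (htailprop a') htt'
    · intro m
      have h1 : (L ^ (N * m)) w = ∑ a ∈ w.support, μ (tail a) ^ m • monomial a (coeff a w) := by
        conv_lhs => rw [← support_sum_monomial_coeff w]
        rw [map_sum]
        exact Finset.sum_congr rfl fun a _ => by rw [hLmon, pow_mul, hχN]
      have h2 : ∑ t ∈ tails w, μ t ^ m • vpart w t
          = ∑ a ∈ w.support, μ (tail a) ^ m • monomial a (coeff a w) := by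
        rw [← Finset.sum_fiberwise_of_maps_to (fun a ha => Finset.mem_image_of_mem tail ha)
          (fun a => μ (tail a) ^ m • monomial a (coeff a w))]
        simp only [htails, hvpart]
        refine Finset.sum_congr rfl fun t ht => ?_
        rw [Finset.smul_sum]
        refine Finset.sum_congr rfl fun a ha => ?_
        rw [(Finset.mem_filter.mp ha).2]
      rw [h2, ← h1]
      exact hWL _ w hw
  -- finite generation of W
  have hWfg : W.FG := by
    have hle : W ≤ restrictTotalDegree (Fin (n+1)) k d := by
      intro p hp
      rw [mem_restrictTotalDegree]
      exact ((mem_homogeneousSubmodule _ _).mp (hWd hp)).totalDegree_le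
    have hfg : (W.comap (restrictTotalDegree (Fin (n+1)) k d).subtype).FG :=
      IsNoetherian.noetherian _
    have h3 := hfg.map (restrictTotalDegree (Fin (n+1)) k d).subtype
    rwa [Submodule.map_comap_subtype, inf_eq_right.mpr hle] at h3
  obtain ⟨G, hG⟩ := hWfg
  have hGW : ∀ g ∈ G, g ∈ W := fun g hg => hG ▸ Submodule.subset_span hg
  set T : Finset (Fin (n+1) →₀ ℕ) := G.biUnion (fun g => tails g) with hT
  set S : Finset (R × (Fin (n+1) →₀ ℕ)) := G ×ˢ T with hS
  set F : R × (Fin (n+1) →₀ ℕ) → R := fun gt => Ppart gt.1 gt.2 * monomial gt.2 1 with hF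
  have hFW : ∀ gt ∈ S, F gt ∈ W := by
    rintro ⟨g, t⟩ hgt
    obtain ⟨hg, -⟩ := Finset.mem_product.mp hgt
    have : F (g, t) = vpart g t := (hvmul g t).symm
    rw [this]
    by_cases ht : t ∈ tails g
    · exact hvW g (hGW g hg) t ht
    · have hempty : g.support.filter (fun a => tail a = t) = ∅ := by
        rw [Finset.filter_eq_empty_iff]
        intro a ha hat
        exact ht (Finset.mem_image.mpr ⟨a, ha, hat⟩)
      simp only [hvpart, hempty, Finset.sum_empty]
      exact W.zero_mem
  have hWspan : W = Submodule.span k (F '' S) := by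
    apply le_antisymm
    · conv_lhs => rw [← hG]
      rw [Submodule.span_le]
      intro g hg
      have hgd : g = ∑ t ∈ tails g, vpart g t := (hdecomp g).symm
      rw [SetLike.mem_coe, hgd]
      refine Submodule.sum_mem _ fun t ht => Submodule.subset_span ?_
      refine ⟨(g, t), ?_, (hvmul g t).symm⟩
      rw [Finset.mem_coe, hS, Finset.mem_product]
      exact ⟨hg, Finset.mem_biUnion.mpr ⟨g, hg, ht⟩⟩
    · rw [Submodule.span_le]
      rintro x ⟨gt, hgt, rfl⟩
      exact hFW gt hgt
  -- indexing
  refine ⟨S.card, fun i => Ppart (S.equivFin.symm i).1.1 (S.equivFin.symm i).1.2,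
    fun i => monomial (S.equivFin.symm i).1.2 1, fun i => hPvars _ _, ?_, ?_⟩
  · intro i
    refine ⟨(S.equivFin.symm i).1.2, ?_, rfl⟩
    have hmem := (S.equivFin.symm i).2
    obtain ⟨-, ht⟩ := Finset.mem_product.mp hmem
    obtain ⟨g, hg, ht'⟩ := Finset.mem_biUnion.mp ht
    simp only [htails] at ht'
    obtain ⟨a, ha, hat⟩ := Finset.mem_image.mp ht'
    intro j hj
    exact htailprop a j (by rw [hat]; exact hj)
  · rw [hWspan]
    congr 1
    ext x
    constructor
    · rintro ⟨gt, hgt, rfl⟩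
      exact ⟨S.equivFin ⟨gt, hgt⟩, by simp [hF]⟩
    · rintro ⟨i, rfl⟩
      exact ⟨(S.equivFin.symm i).1, (S.equivFin.symm i).2, rfl⟩
end

section
/- Let k be an algebraically closed field of characteristic 0, let n ≥ 1 and 1 ≤ r ≤ n. Let μ_2, …, μ_r ∈ k be roots of unity and let μ_{r+1}, …, μ_n ∈ k be nonzero and multiplicatively independent. Let σ be the k-algebra automorphism of k[x_0, …, x_n] determined by σ(x_0) = x_0, σ(x_1) = x_1 + x_0, and σ(x_i) = μ_i·x_i for 2 ≤ i ≤ n. Suppose R ∈ k[x_0, …, x_n] is a nonzero polynomial and c ∈ k is such that σ(R) = c·R. Then there exist a polynomial P involving only the variables x_0, x_2, …, x_r and a monomial Q in the variables x_{r+1}, …, x_n such that R = P·Q; in particular R does not involve the variable x_1. -/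
open MvPolynomial Finsupp

section Helpers
variable {k : Type*} [CommSemiring k] {n : ℕ}

lemma sigma_diag_monomial (ν : Fin (n+1) → k)
    (σ : MvPolynomial (Fin (n+1)) k →ₐ[k] MvPolynomial (Fin (n+1)) k)
    (hd : ∀ i : Fin (n+1), i ≠ 1 → σ (X i) = C (ν i) * X i)
    (s : Fin (n+1) →₀ ℕ) (hs : s 1 = 0) :
    σ (monomial s 1) = monomial s (∏ i, ν i ^ s i) := by
  have h1 : (monomial s (1:k)) = ∏ i ∈ s.support, X i ^ s i := by
    rw [monomial_eq, map_one, one_mul]; rfl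
  have h2 : ∀ i ∈ s.support, σ (X i ^ s i) = C (ν i ^ s i) * X i ^ s i := by
    intro i hi
    have hne : i ≠ 1 := by
      rintro rfl; exact (Finsupp.mem_support_iff.mp hi) hs
    rw [map_pow, hd i hne, mul_pow, map_pow]
  have h3 : (∏ i ∈ s.support, C (ν i ^ s i) : MvPolynomial (Fin (n+1)) k)
      = C (∏ i ∈ s.support, ν i ^ s i) := by rw [map_prod]
  rw [h1, map_prod, Finset.prod_congr rfl h2, Finset.prod_mul_distrib, h3, ← h1,
    C_mul_monomial, mul_one]
  congr 1
  refine Finset.prod_subset (Finset.subset_univ _) ?_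
  intro i _ hi
  rw [Finsupp.notMem_support_iff.mp hi, pow_zero]

lemma sigma_monomial (ν : Fin (n+1) → k) (hν1 : ν 1 = 1)
    (σ : MvPolynomial (Fin (n+1)) k →ₐ[k] MvPolynomial (Fin (n+1)) k)
    (hσ1 : σ (X 1) = X 1 + X 0)
    (hd : ∀ i : Fin (n+1), i ≠ 1 → σ (X i) = C (ν i) * X i)
    (a : Fin (n+1) →₀ ℕ) :
    σ (monomial a 1) = ∑ j ∈ Finset.range (a 1 + 1),
      monomial (Finsupp.single 1 j + Finsupp.single 0 (a 1 - j) + a.erase 1)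
        ((∏ i, ν i ^ a i) * ((a 1).choose j : k)) := by
  have hsplit : monomial a (1:k) = X 1 ^ (a 1) * monomial (a.erase 1) 1 := by
    rw [X_pow_eq_monomial, monomial_mul, one_mul, Finsupp.single_add_erase]
  have hprod : (∏ i, ν i ^ (a.erase 1) i) = ∏ i, ν i ^ a i := by
    refine Finset.prod_congr rfl fun i _ => ?_
    by_cases h : i = 1
    · subst h; rw [hν1, one_pow, one_pow]
    · rw [Finsupp.erase_ne h]
  rw [hsplit, map_mul, map_pow, hσ1,
    sigma_diag_monomial ν σ hd (a.erase 1) (Finsupp.erase_same), hprod,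
    add_pow, Finset.sum_mul]
  refine Finset.sum_congr rfl fun j hj => ?_
  rw [X_pow_eq_monomial, X_pow_eq_monomial,
    show ((((a 1).choose j : ℕ)) : MvPolynomial (Fin (n+1)) k) = C (((a 1).choose j : ℕ) : k) from
      (map_natCast (C : k →+* MvPolynomial (Fin (n+1)) k) _).symm,
    monomial_mul, mul_comm _ (C _), C_mul_monomial, monomial_mul]
  simp [mul_comm]

lemma coeff_sigma_monomial (ν : Fin (n+1) → k) (hν1 : ν 1 = 1) (hn01 : (0:Fin (n+1)) ≠ 1)
    (σ : MvPolynomial (Fin (n+1)) k →ₐ[k] MvPolynomial (Fin (n+1)) k)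
    (hσ1 : σ (X 1) = X 1 + X 0)
    (hd : ∀ i : Fin (n+1), i ≠ 1 → σ (X i) = C (ν i) * X i)
    (a b : Fin (n+1) →₀ ℕ) :
    coeff b (σ (monomial a 1)) =
      if b 1 ≤ a 1 ∧ b 0 + b 1 = a 0 + a 1 ∧ (∀ i : Fin (n+1), i ≠ 0 → i ≠ 1 → b i = a i)
      then (∏ i, ν i ^ a i) * ((a 1).choose (b 1) : k) else 0 := by
  have hm : ∀ j : ℕ, ∀ i : Fin (n+1),
      ((Finsupp.single 1 j + Finsupp.single 0 (a 1 - j) + a.erase 1 : Fin (n+1) →₀ ℕ)) i =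
        if i = 1 then j else if i = 0 then (a 1 - j) + a 0 else a i := by
    intro j i
    rw [Finsupp.add_apply, Finsupp.add_apply]
    by_cases h1 : i = 1
    · subst h1
      rw [if_pos rfl, Finsupp.single_eq_same, Finsupp.single_eq_of_ne' hn01,
        Finsupp.erase_same, add_zero, add_zero]
    · rw [if_neg h1, Finsupp.single_eq_of_ne' (fun h => h1 h.symm), Finsupp.erase_ne h1]
      by_cases h0 : i = 0
      · subst h0; rw [if_pos rfl, Finsupp.single_eq_same, zero_add]
      · rw [if_neg h0, Finsupp.single_eq_of_ne' (fun h => h0 h.symm), zero_add, zero_add]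
  rw [sigma_monomial ν hν1 σ hσ1 hd, coeff_sum]
  simp only [coeff_monomial]
  by_cases hC : b 1 ≤ a 1 ∧ b 0 + b 1 = a 0 + a 1 ∧
      (∀ i : Fin (n+1), i ≠ 0 → i ≠ 1 → b i = a i)
  · have h1 : ∀ j ∈ Finset.range (a 1 + 1), j ≠ b 1 →
        (if ((Finsupp.single 1 j + Finsupp.single 0 (a 1 - j) + a.erase 1 : Fin (n+1) →₀ ℕ)) = b
          then (∏ i, ν i ^ a i) * ((a 1).choose j : k) else 0) = 0 := by
      intro j _ hjne
      rw [if_neg]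
      intro heq
      have h := hm j 1
      rw [heq, if_pos rfl] at h
      exact hjne h.symm
    have h2 : (b 1 ∉ Finset.range (a 1 + 1)) →
        (if ((Finsupp.single 1 (b 1) + Finsupp.single 0 (a 1 - b 1) + a.erase 1 : Fin (n+1) →₀ ℕ)) = b
          then (∏ i, ν i ^ a i) * ((a 1).choose (b 1) : k) else 0) = 0 :=
      fun hb1 => absurd (Finset.mem_range.mpr (Nat.lt_succ_of_le hC.1)) hb1
    rw [Finset.sum_eq_single (b 1) h1 h2, if_pos hC, if_pos]
    ext i
    rw [hm (b 1) i]
    by_cases hi1 : i = 1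
    · subst hi1; rw [if_pos rfl]
    · rw [if_neg hi1]
      by_cases hi0 : i = 0
      · subst hi0; rw [if_pos rfl]
        have := hC.2.1; have := hC.1; omega
      · rw [if_neg hi0]; exact (hC.2.2 i hi0 hi1).symm
  · rw [if_neg hC]
    apply Finset.sum_eq_zero
    intro j hj
    rw [if_neg]
    intro heq
    apply hC
    have hjle : j ≤ a 1 := Nat.lt_succ_iff.mp (Finset.mem_range.mp hj)
    have hb : ∀ i, b i = if i = 1 then j else if i = 0 then (a 1 - j) + a 0 else a i := by
      intro i; rw [← heq]; exact hm j i
    have h1 := hb 1; rw [if_pos rfl] at h1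
    have h0 := hb 0; rw [if_neg hn01, if_pos rfl] at h0
    refine ⟨by omega, by omega, fun i hi0 hi1 => ?_⟩
    have := hb i; rwa [if_neg hi1, if_neg hi0] at this

lemma coeff_sigma (ν : Fin (n+1) → k) (hν1 : ν 1 = 1) (hn01 : (0:Fin (n+1)) ≠ 1)
    (σ : MvPolynomial (Fin (n+1)) k →ₐ[k] MvPolynomial (Fin (n+1)) k)
    (hσ1 : σ (X 1) = X 1 + X 0)
    (hd : ∀ i : Fin (n+1), i ≠ 1 → σ (X i) = C (ν i) * X i)
    (R : MvPolynomial (Fin (n+1)) k) (b : Fin (n+1) →₀ ℕ) :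
    coeff b (σ R) = ∑ a ∈ R.support, coeff a R *
      (if b 1 ≤ a 1 ∧ b 0 + b 1 = a 0 + a 1 ∧ (∀ i : Fin (n+1), i ≠ 0 → i ≠ 1 → b i = a i)
       then (∏ i, ν i ^ a i) * ((a 1).choose (b 1) : k) else 0) := by
  conv_lhs => rw [R.as_sum]
  rw [map_sum, coeff_sum]
  refine Finset.sum_congr rfl fun a _ => ?_
  have h : (monomial a) (coeff a R) = coeff a R • (monomial a) (1:k) := by
    rw [smul_monomial, smul_eq_mul, mul_one]
  rw [h, map_smul, coeff_smul, smul_eq_mul,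
    coeff_sigma_monomial ν hν1 hn01 σ hσ1 hd]

end Helpers


/-- one-dimensional case of Corollary 2.5 of the paper.
Let `k` be algebraically closed of characteristic 0, `n ≥ 1`, `1 ≤ r ≤ n`.
Let `μ 2, …, μ r` be roots of unity and `μ (r+1), …, μ n` be nonzero and multiplicatively
independent.  Let `σ` be the `k`-algebra automorphism of `k[x_0, …, x_n]` with
`σ x_0 = x_0`, `σ x_1 = x_1 + x_0`, `σ x_i = μ i • x_i` for `2 ≤ i`.  If `R ≠ 0` and
`σ R = c • R` for some `c ∈ k`, then `R = P * Q` where `P` involves only the variables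
`x_0, x_2, …, x_r` and `Q` is a monomial in `x_(r+1), …, x_n`; in particular `R` does not
involve `x_1`. -/
theorem statement3 {k : Type*} [Field k] [CharZero k] [IsAlgClosed k]
    (n r : ℕ) (hn : 1 ≤ n) (hr1 : 1 ≤ r) (hrn : r ≤ n)
    (mu : Fin (n + 1) → k)
    (hroots : ∀ i : Fin (n + 1), 2 ≤ (i : ℕ) → (i : ℕ) ≤ r → ∃ N : ℕ, 1 ≤ N ∧ mu i ^ N = 1)
    (hne : ∀ i : Fin (n + 1), r < (i : ℕ) → mu i ≠ 0)
    (hindep : ∀ c : Fin (n + 1) → ℤ,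
      (∏ i ∈ Finset.univ.filter (fun i : Fin (n + 1) => r < (i : ℕ)), mu i ^ c i) = 1 →
      ∀ i : Fin (n + 1), r < (i : ℕ) → c i = 0)
    (σ : MvPolynomial (Fin (n + 1)) k →ₐ[k] MvPolynomial (Fin (n + 1)) k)
    (hσ0 : σ (X 0) = X 0) (hσ1 : σ (X 1) = X 1 + X 0)
    (hσ : ∀ i : Fin (n + 1), 2 ≤ (i : ℕ) → σ (X i) = mu i • X i)
    (R : MvPolynomial (Fin (n + 1)) k) (hR : R ≠ 0)
    (c : k) (heig : σ R = c • R) :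
    ∃ P Q : MvPolynomial (Fin (n + 1)) k,
      (∀ j ∈ P.vars, (j : ℕ) ≠ 1 ∧ (j : ℕ) ≤ r) ∧
      (∃ a : Fin (n + 1) →₀ ℕ,
        (∀ j : Fin (n + 1), a j ≠ 0 → r < (j : ℕ)) ∧ Q = monomial a 1) ∧
      R = P * Q ∧ (1 : Fin (n + 1)) ∉ R.vars := by
  classical
  -- basic Fin facts
  have hv1 : ((1 : Fin (n+1)) : ℕ) = 1 := by
    rw [Fin.val_one']
    exact Nat.mod_eq_of_lt (by omega)
  have hv0 : ((0 : Fin (n+1)) : ℕ) = 0 := rfl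
  have hn01 : (0 : Fin (n+1)) ≠ 1 := by
    intro h
    have h2 : ((0 : Fin (n+1)) : ℕ) = ((1 : Fin (n+1)) : ℕ) := congrArg Fin.val h
    rw [hv0, hv1] at h2
    exact absurd h2 (by omega)
  have hfin_cases : ∀ i : Fin (n+1), i = 0 ∨ i = 1 ∨ 2 ≤ (i:ℕ) := by
    intro i
    by_cases h0 : (i:ℕ) = 0
    · exact Or.inl (Fin.ext (by rw [h0, hv0]))
    · by_cases h1 : (i:ℕ) = 1
      · exact Or.inr (Or.inl (Fin.ext (by rw [h1, hv1])))
      · exact Or.inr (Or.inr (by omega))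
  -- the diagonal eigenvalues
  set ν : Fin (n+1) → k := fun i => if (i:ℕ) ≤ 1 then 1 else mu i with hνdef
  have hν1 : ν 1 = 1 := by
    simp only [hνdef]
    rw [if_pos (le_of_eq hv1)]
  have hν0 : ν 0 = 1 := by
    simp only [hνdef]
    rw [if_pos (by rw [hv0]; omega)]
  have hνmu : ∀ i : Fin (n+1), 2 ≤ (i:ℕ) → ν i = mu i := by
    intro i h2
    simp only [hνdef]
    rw [if_neg (by omega)]
  have hd : ∀ i : Fin (n+1), i ≠ 1 → σ (X i) = C (ν i) * X i := by
    intro i hi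
    rcases hfin_cases i with h0 | h1 | h2
    · subst h0; rw [hσ0, hν0, map_one, one_mul]
    · exact absurd h1 hi
    · rw [hσ i h2, hνmu i h2, smul_eq_C_mul]
  have hνne : ∀ i, ν i ≠ 0 := by
    intro i
    rcases hfin_cases i with h0 | h1 | h2
    · rw [h0, hν0]; exact one_ne_zero
    · rw [h1, hν1]; exact one_ne_zero
    · rw [hνmu i h2]
      by_cases hir : (i:ℕ) ≤ r
      · obtain ⟨N, hN1, hNe⟩ := hroots i h2 hir
        intro h
        rw [h, zero_pow (by omega)] at hNe
        exact zero_ne_one hNe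
      · exact hne i (by omega)
  -- key coefficient formula
  have key : ∀ b : Fin (n+1) →₀ ℕ, (∑ a ∈ R.support, coeff a R *
      (if b 1 ≤ a 1 ∧ b 0 + b 1 = a 0 + a 1 ∧ (∀ i : Fin (n+1), i ≠ 0 → i ≠ 1 → b i = a i)
       then (∏ i, ν i ^ a i) * ((a 1).choose (b 1) : k) else 0)) = c * coeff b R := by
    intro b
    rw [← coeff_sigma ν hν1 hn01 σ hσ1 hd R b, heig, coeff_smul, smul_eq_mul]
  -- the max x1 degree
  set s := R.support.sup (fun a => a 1) with hsdef
  have hsupne : R.support.Nonempty := support_nonempty.mpr hR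
  obtain ⟨b, hbmem, hbs⟩ := Finset.exists_mem_eq_sup R.support hsupne (fun a => a 1)
  -- Fact A
  have factA : ∀ b' ∈ R.support, (∀ a ∈ R.support, a 1 ≤ b' 1) →
      (∏ i, ν i ^ b' i) = c := by
    intro b' hb' htop
    have hk := key b'
    have h1 : ∀ a ∈ R.support, a ≠ b' → coeff a R *
        (if b' 1 ≤ a 1 ∧ b' 0 + b' 1 = a 0 + a 1 ∧
            (∀ i : Fin (n+1), i ≠ 0 → i ≠ 1 → b' i = a i)
         then (∏ i, ν i ^ a i) * ((a 1).choose (b' 1) : k) else 0) = 0 := by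
      intro a ha hane
      rw [if_neg, mul_zero]
      rintro ⟨hc1, hc2, hc3⟩
      apply hane
      have ht := htop a ha
      ext i
      rcases hfin_cases i with h0 | h1 | h2
      · subst h0; omega
      · subst h1; omega
      · refine (hc3 i ?_ ?_).symm
        · intro h; rw [h, hv0] at h2; omega
        · intro h; rw [h, hv1] at h2; omega
    rw [Finset.sum_eq_single b' h1 (fun h => absurd hb' h),
      if_pos ⟨le_refl _, rfl, fun i _ _ => rfl⟩, Nat.choose_self, Nat.cast_one,
      mul_one] at hk
    have hcoeff : coeff b' R ≠ 0 := MvPolynomial.mem_support_iff.mp hb'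
    have h2 : coeff b' R * (∏ i, ν i ^ b' i) = coeff b' R * c := by rw [hk]; ring
    exact mul_left_cancel₀ hcoeff h2
  have hc : (∏ i, ν i ^ b i) = c :=
    factA b hbmem (fun a ha => hbs ▸ Finset.le_sup (f := fun a => a 1) ha)
  have hc0 : c ≠ 0 := by
    rw [← hc]
    exact Finset.prod_ne_zero_iff.mpr (fun i _ => pow_ne_zero _ (hνne i))
  -- s = 0
  have hs0 : s = 0 := by
    by_contra hsne
    have hs1 : 1 ≤ s := Nat.one_le_iff_ne_zero.mpr hsne
    set b' : Fin (n+1) →₀ ℕ :=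
      Finsupp.single 0 (b 0 + 1) + Finsupp.single 1 (s-1) + (b.erase 0).erase 1 with hb'def
    have hb'app : ∀ i, b' i = if i = 0 then b 0 + 1 else if i = 1 then s - 1 else b i := by
      intro i
      rw [hb'def, Finsupp.add_apply, Finsupp.add_apply]
      rcases hfin_cases i with h0 | h1 | h2
      · subst h0
        rw [if_pos rfl, Finsupp.single_eq_same, Finsupp.single_eq_of_ne' (Ne.symm hn01),
          Finsupp.erase_ne hn01, Finsupp.erase_same, add_zero, add_zero]
      · subst h1
        rw [if_neg (Ne.symm hn01), if_pos rfl, Finsupp.single_eq_of_ne' hn01,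
          Finsupp.single_eq_same, Finsupp.erase_same, add_zero, zero_add]
      · have hi0 : i ≠ 0 := by intro h; rw [h, hv0] at h2; omega
        have hi1 : i ≠ 1 := by intro h; rw [h, hv1] at h2; omega
        rw [if_neg hi0, if_neg hi1, Finsupp.single_eq_of_ne' (Ne.symm hi0),
          Finsupp.single_eq_of_ne' (Ne.symm hi1), Finsupp.erase_ne hi1,
          Finsupp.erase_ne hi0, zero_add, zero_add]
    have hb'0 : b' 0 = b 0 + 1 := by rw [hb'app]; simp
    have hb'1 : b' 1 = s - 1 := by rw [hb'app, if_neg (Ne.symm hn01), if_pos rfl]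
    have hb'ne : ∀ i : Fin (n+1), i ≠ 0 → i ≠ 1 → b' i = b i := by
      intro i h0 h1; rw [hb'app, if_neg h0, if_neg h1]
    have hb1 : b 1 = s := hbs.symm
    have hνb' : (∏ i, ν i ^ b' i) = ∏ i, ν i ^ b i := by
      refine Finset.prod_congr rfl fun i _ => ?_
      rcases hfin_cases i with h0 | h1 | h2
      · subst h0; rw [hν0, one_pow, one_pow]
      · subst h1; rw [hν1, one_pow, one_pow]
      · rw [hb'ne i (by intro h; rw [h, hv0] at h2; omega)
          (by intro h; rw [h, hv1] at h2; omega)]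
    have hk := key b'
    -- f := the summand
    set f : (Fin (n+1) →₀ ℕ) → k := fun a => coeff a R *
      (if b' 1 ≤ a 1 ∧ b' 0 + b' 1 = a 0 + a 1 ∧
          (∀ i : Fin (n+1), i ≠ 0 → i ≠ 1 → b' i = a i)
       then (∏ i, ν i ^ a i) * ((a 1).choose (b' 1) : k) else 0) with hfdef
    have hsum : f b + ∑ a ∈ R.support.erase b, f a = c * coeff b' R := by
      rw [Finset.add_sum_erase R.support f hbmem]; exact hk
    have htop : ∀ a ∈ R.support, a 1 ≤ s := fun a ha => hsdef ▸ Finset.le_sup (f := fun a => a 1) ha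
    have hbb' : b ≠ b' := by
      intro h
      have h2 : b 1 = b' 1 := congrArg (fun g : Fin (n+1) →₀ ℕ => g 1) h
      rw [hb'1, hb1] at h2
      omega
    have herase : ∑ a ∈ R.support.erase b, f a = f b' := by
      apply Finset.sum_eq_single b'
      · intro a ha hane
        have hamem := Finset.mem_of_mem_erase ha
        have haneb : a ≠ b := Finset.ne_of_mem_erase ha
        rw [hfdef]
        simp only
        rw [if_neg, mul_zero]
        rintro ⟨hc1, hc2, hc3⟩
        rw [hb'1] at hc1
        rw [hb'0, hb'1] at hc2
        have hta := htop a hamem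
        have : a 1 = s - 1 ∨ a 1 = s := by omega
        rcases this with h' | h'
        · apply hane
          ext i
          rcases hfin_cases i with h0 | h1 | h2
          · subst h0; rw [hb'0]; omega
          · subst h1; rw [hb'1]; omega
          · refine (hc3 i (by intro h; rw [h, hv0] at h2; omega)
              (by intro h; rw [h, hv1] at h2; omega)).symm
        · apply haneb
          ext i
          rcases hfin_cases i with h0 | h1 | h2
          · subst h0; omega
          · subst h1; omega
          · rw [← hc3 i (by intro h; rw [h, hv0] at h2; omega)
              (by intro h; rw [h, hv1] at h2; omega)]
            exact hb'ne i (by intro h; rw [h, hv0] at h2; omega)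
              (by intro h; rw [h, hv1] at h2; omega)
      · intro hnot
        rw [hfdef]
        simp only
        have : coeff b' R = 0 := by
          by_contra hcb'
          exact hnot (Finset.mem_erase.mpr ⟨Ne.symm hbb', MvPolynomial.mem_support_iff.mpr hcb'⟩)
        rw [this, zero_mul]
    have hfb : f b = coeff b R * (c * (s:k)) := by
      have hcond : b' 1 ≤ b 1 ∧ b' 0 + b' 1 = b 0 + b 1 ∧
          (∀ i : Fin (n+1), i ≠ 0 → i ≠ 1 → b' i = b i) := by
        refine ⟨by omega, by rw [hb'0, hb'1]; omega, fun i h0 h1 => hb'ne i h0 h1⟩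
      rw [hfdef]
      simp only
      rw [if_pos hcond]
      rw [hb1, hb'1, hc]
      congr 2
      obtain ⟨t, ht⟩ : ∃ t, s = t + 1 := ⟨s - 1, by omega⟩
      rw [ht, show t + 1 - 1 = t from rfl, Nat.choose_succ_self_right]
    have hfb' : f b' = coeff b' R * c := by
      have hcond : b' 1 ≤ b' 1 ∧ b' 0 + b' 1 = b' 0 + b' 1 ∧
          (∀ i : Fin (n+1), i ≠ 0 → i ≠ 1 → b' i = b' i) :=
        ⟨le_refl _, rfl, fun i _ _ => rfl⟩
      rw [hfdef]
      beta_reduce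
      rw [if_pos hcond, Nat.choose_self, Nat.cast_one,
        mul_one, hνb', hc]
    rw [herase, hfb, hfb'] at hsum
    have : coeff b R * (c * (s:k)) = 0 := by
      have h := hsum
      rw [mul_comm c (coeff b' R)] at h
      exact (add_eq_right).mp h
    have hcoeffb : coeff b R ≠ 0 := MvPolynomial.mem_support_iff.mp hbmem
    exact absurd this (mul_ne_zero hcoeffb (mul_ne_zero hc0 (Nat.cast_ne_zero.mpr hsne)))
  -- no x1
  have hall : ∀ a ∈ R.support, a 1 = 0 :=
    fun a ha => Nat.le_zero.mp ((Finset.le_sup (f := fun a => a 1) ha).trans_eq (hsdef.symm.trans hs0))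
  have hvars1 : (1 : Fin (n+1)) ∉ R.vars := by
    rw [mem_vars]
    rintro ⟨d, hdm, hmem⟩
    exact (Finsupp.mem_support_iff.mp hmem) (hall d hdm)
  -- all monomials are eigenvectors with eigenvalue c
  have heigall : ∀ a ∈ R.support, (∏ i, ν i ^ a i) = c :=
    fun a ha => factA a ha (fun a' ha' => by rw [hall a' ha', hall a ha])
  -- the common exponent N
  choose Nf hNf1 hNf2 using hroots
  obtain ⟨N, hN1, hNpow⟩ : ∃ N : ℕ, 1 ≤ N ∧
      ∀ i : Fin (n+1), (i:ℕ) ≤ r → ν i ^ N = 1 := by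
    refine ⟨∏ i : Fin (n+1), (if h : 2 ≤ (i:ℕ) ∧ (i:ℕ) ≤ r then Nf i h.1 h.2 else 1),
      ?_, ?_⟩
    · refine Finset.one_le_prod' fun i _ => ?_
      split
      · exact hNf1 i _ _
      · exact le_refl 1
    · intro i hir
      by_cases hle : (i:ℕ) ≤ 1
      · have hνi : ν i = 1 := by
          simp only [hνdef]
          rw [if_pos hle]
        rw [hνi, one_pow]
      · have h2 : 2 ≤ (i:ℕ) := by omega
        have hd1 : (if h : 2 ≤ (i:ℕ) ∧ (i:ℕ) ≤ r then Nf i h.1 h.2 else 1)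
            = Nf i h2 hir := dif_pos ⟨h2, hir⟩
        have hdvd : Nf i h2 hir ∣
            ∏ i : Fin (n+1), (if h : 2 ≤ (i:ℕ) ∧ (i:ℕ) ≤ r then Nf i h.1 h.2 else 1) := by
          rw [← hd1]
          exact Finset.dvd_prod_of_mem _ (Finset.mem_univ i)
        obtain ⟨t, ht⟩ := hdvd
        rw [hνmu i h2, ht, pow_mul, hNf2 i h2 hir, one_pow]
  -- powers identity
  have hpowa : ∀ a ∈ R.support,
      (∏ i ∈ Finset.univ.filter (fun i : Fin (n+1) => r < (i:ℕ)), mu i ^ (N * a i))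
        = c ^ N := by
    intro a ha
    have h1 : c ^ N = ∏ i : Fin (n+1), ν i ^ (N * a i) := by
      rw [← heigall a ha, ← Finset.prod_pow]
      exact Finset.prod_congr rfl fun i _ => by rw [← pow_mul, mul_comm]
    calc ∏ i ∈ Finset.univ.filter (fun i : Fin (n+1) => r < (i:ℕ)), mu i ^ (N * a i)
        = ∏ i ∈ Finset.univ.filter (fun i : Fin (n+1) => r < (i:ℕ)), ν i ^ (N * a i) := by
          refine Finset.prod_congr rfl fun i hi => ?_
          have hri : r < (i:ℕ) := (Finset.mem_filter.mp hi).2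
          rw [hνmu i (by omega)]
      _ = ∏ i : Fin (n+1), ν i ^ (N * a i) := by
          refine Finset.prod_subset (Finset.filter_subset _ _) fun i _ hni => ?_
          have hir : (i:ℕ) ≤ r := by
            by_contra h
            exact hni (Finset.mem_filter.mpr ⟨Finset.mem_univ i, by omega⟩)
          rw [pow_mul, hNpow i hir, one_pow]
      _ = c ^ N := h1.symm
  -- equal exponents above r
  have hsame : ∀ a ∈ R.support, ∀ b2 ∈ R.support, ∀ i : Fin (n+1), r < (i:ℕ) →
      a i = b2 i := by
    intro a ha b2 hb2
    set F := Finset.univ.filter (fun i : Fin (n+1) => r < (i:ℕ)) with hF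
    set d : Fin (n+1) → ℤ := fun i =>
      if r < (i:ℕ) then ((N * a i : ℕ) : ℤ) - ((N * b2 i : ℕ) : ℤ) else 0 with hddef
    have hcN : (c:k) ^ N ≠ 0 := pow_ne_zero _ hc0
    have hz : ∀ i ∈ F, mu i ^ d i * mu i ^ ((N * b2 i : ℕ) : ℤ)
        = mu i ^ ((N * a i : ℕ) : ℤ) := by
      intro i hiF
      have hri : r < (i:ℕ) := (Finset.mem_filter.mp hiF).2
      have hmu : mu i ≠ 0 := hne i hri
      rw [← zpow_add₀ hmu]
      congr 1
      simp only [hddef, if_pos hri]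
      ring
    have h2 : (∏ i ∈ F, mu i ^ d i) * (∏ i ∈ F, mu i ^ ((N * b2 i : ℕ) : ℤ))
        = ∏ i ∈ F, mu i ^ ((N * a i : ℕ) : ℤ) := by
      rw [← Finset.prod_mul_distrib]
      exact Finset.prod_congr rfl hz
    have hcast : ∀ g : Fin (n+1) →₀ ℕ,
        (∏ i ∈ F, mu i ^ ((N * g i : ℕ) : ℤ)) = ∏ i ∈ F, mu i ^ (N * g i) :=
      fun g => Finset.prod_congr rfl fun i _ => zpow_natCast _ _
    rw [hcast a, hcast b2, hpowa a ha, hpowa b2 hb2] at h2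
    have hX : (∏ i ∈ F, mu i ^ d i) = 1 :=
      mul_right_cancel₀ hcN (by rw [h2, one_mul])
    intro i hi
    have hdz := hindep d hX i hi
    simp only [hddef, if_pos hi] at hdz
    have h' : N * a i = N * b2 i := by
      have h'' := sub_eq_zero.mp hdz
      exact_mod_cast h''
    exact Nat.eq_of_mul_eq_mul_left (by omega) h'
  -- construct P and Q
  obtain ⟨b0, hb0⟩ := hsupne
  set aQ : Fin (n+1) →₀ ℕ := b0.filter (fun i : Fin (n+1) => r < (i:ℕ)) with haQdef
  have haQapp : ∀ i, aQ i = if r < (i:ℕ) then b0 i else 0 :=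
    fun i => Finsupp.filter_apply _ b0 i
  have haQle : ∀ b2 ∈ R.support, aQ ≤ b2 := by
    intro b2 hb2
    rw [Finsupp.le_def]
    intro i
    rw [haQapp]
    split
    · rw [hsame b0 hb0 b2 hb2 i (by assumption)]
    · exact Nat.zero_le _
  set P : MvPolynomial (Fin (n+1)) k :=
    ∑ b2 ∈ R.support, monomial (b2 - aQ) (coeff b2 R) with hPdef
  refine ⟨P, monomial aQ 1, ?_, ⟨aQ, ?_, rfl⟩, ?_, hvars1⟩
  · intro j hj
    rw [mem_vars] at hj
    obtain ⟨d, hdP, hjd⟩ := hj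
    have hdsub := MvPolynomial.support_sum hdP
    rw [Finset.mem_biUnion] at hdsub
    obtain ⟨b2, hb2, hdb2⟩ := hdsub
    have hdeq : d = b2 - aQ := Finset.mem_singleton.mp (support_monomial_subset hdb2)
    have hj' : (b2 - aQ) j ≠ 0 := by
      rw [← hdeq]; exact Finsupp.mem_support_iff.mp hjd
    rw [Finsupp.tsub_apply] at hj'
    constructor
    · intro h1
      have hje : j = 1 := Fin.ext (by rw [h1, hv1])
      rw [hje, hall b2 hb2] at hj'
      omega
    · by_contra hgt
      push_neg at hgt
      rw [haQapp, if_pos hgt, ← hsame b0 hb0 b2 hb2 j hgt] at hj'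
      omega
  · intro j hj
    by_contra h
    rw [haQapp, if_neg h] at hj
    exact hj rfl
  · rw [hPdef, Finset.sum_mul]
    conv_lhs => rw [R.as_sum]
    refine Finset.sum_congr rfl fun b2 hb2 => ?_
    rw [monomial_mul, mul_one, tsub_add_cancel_of_le (haQle b2 hb2)]
end

section
/- Let k be an algebraically closed field of characteristic 0, let n ≥ 1 and 0 ≤ r ≤ n−1. Let λ_0 = 1, let λ_1, …, λ_r ∈ k be roots of unity, and let λ_{r+1}, …, λ_n ∈ k be nonzero and multiplicatively independent. Let σ be the k-algebra automorphism of k[x_0, …, x_n] determined by σ(x_i) = λ_i·x_i for all i. Let I ⊆ k[x_0, …, x_n] be a homogeneous prime ideal such that σ(I) = I and x_i ∉ I for every 0 ≤ i ≤ n. Then I equals the radical of the ideal generated by I ∩ k[x_0, …, x_r], i.e., I is, up to radical, generated by polynomials involving only the variables x_0, …, x_r. -/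
open MvPolynomial

/-- ideal-theoretic form of Lemma 3.1(1) of the paper.
Let `k` be algebraically closed of characteristic 0, `n ≥ 1`, `0 ≤ r ≤ n - 1`.
Let `λ 0 = 1`, `λ 1, …, λ r` roots of unity, `λ (r+1), …, λ n` nonzero and
multiplicatively independent, and let `σ` be the `k`-algebra automorphism of
`k[x_0, …, x_n]` with `σ (x i) = λ i • x i`.  If `I` is a homogeneous prime ideal with
`σ(I) = I` and `x i ∉ I` for all `i`, then `I` equals the radical of the ideal generated
by its elements involving only the variables `x_0, …, x_r`. -/
theorem statement4 {k : Type*} [Field k] [CharZero k] [IsAlgClosed k]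
    (n r : ℕ) (hn : 1 ≤ n) (hr : r ≤ n - 1)
    (lam : Fin (n + 1) → k) (hlam0 : lam 0 = 1)
    (hroots : ∀ i : Fin (n + 1), 1 ≤ (i : ℕ) → (i : ℕ) ≤ r → ∃ N : ℕ, 1 ≤ N ∧ lam i ^ N = 1)
    (hne : ∀ i : Fin (n + 1), r < (i : ℕ) → lam i ≠ 0)
    (hindep : ∀ c : Fin (n + 1) → ℤ,
      (∏ i ∈ Finset.univ.filter (fun i : Fin (n + 1) => r < (i : ℕ)), lam i ^ c i) = 1 →
      ∀ i : Fin (n + 1), r < (i : ℕ) → c i = 0)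
    (σ : MvPolynomial (Fin (n + 1)) k →ₐ[k] MvPolynomial (Fin (n + 1)) k)
    (hσ : ∀ i : Fin (n + 1), σ (X i) = lam i • X i)
    (I : Ideal (MvPolynomial (Fin (n + 1)) k)) (hprime : I.IsPrime)
    (hhom : ∃ S : Set (MvPolynomial (Fin (n + 1)) k),
      (∀ p ∈ S, ∃ d : ℕ, p.IsHomogeneous d) ∧ I = Ideal.span S)
    (hinv : I.map (σ : MvPolynomial (Fin (n + 1)) k →+* MvPolynomial (Fin (n + 1)) k) = I)
    (hX : ∀ i : Fin (n + 1), X i ∉ I) :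
    I = (Ideal.span ((I : Set (MvPolynomial (Fin (n + 1)) k)) ∩
          {p | ∀ j ∈ p.vars, (j : ℕ) ≤ r})).radical := by
  classical
  set T : Set (MvPolynomial (Fin (n + 1)) k) := {p | ∀ j ∈ p.vars, (j : ℕ) ≤ r} with hT
  set J : Ideal (MvPolynomial (Fin (n + 1)) k) :=
    Ideal.span ((I : Set (MvPolynomial (Fin (n + 1)) k)) ∩ T) with hJ
  -- all the `lam i` are nonzero
  have lam_ne : ∀ i : Fin (n + 1), lam i ≠ 0 := by
    intro i
    rcases lt_or_ge r (i : ℕ) with h | h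
    · exact hne i h
    · rcases Nat.eq_zero_or_pos (i : ℕ) with h0 | h0
      · have : i = 0 := Fin.ext (by simpa using h0)
        rw [this, hlam0]; exact one_ne_zero
      · obtain ⟨N, hN1, hN⟩ := hroots i h0 h
        intro h'
        rw [h', zero_pow (by omega : N ≠ 0)] at hN
        exact zero_ne_one hN
  -- the "weight" (eigenvalue) of a monomial
  set w : (Fin (n + 1) →₀ ℕ) → k := fun a => ∏ i, lam i ^ a i with hw
  have w_ne : ∀ a, w a ≠ 0 := fun a =>
    Finset.prod_ne_zero_iff.mpr fun i _ => pow_ne_zero _ (lam_ne i)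
  -- the eigencomponent of a polynomial
  set Cw : k → MvPolynomial (Fin (n + 1)) k → MvPolynomial (Fin (n + 1)) k :=
    fun μ f => ∑ a ∈ f.support.filter (fun a => w a = μ), monomial a (coeff a f) with hCw
  have coeff_Cw : ∀ μ f b, coeff b (Cw μ f) = if w b = μ then coeff b f else 0 := by
    intro μ f b
    rw [hCw]
    simp only [coeff_sum, coeff_monomial]
    rw [Finset.sum_ite_eq' (f.support.filter fun a => w a = μ) b (fun a => coeff a f)]
    by_cases hb : b ∈ f.support
    · simp [Finset.mem_filter, hb]
    · have hcb : coeff b f = 0 := by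
        by_contra hc
        exact hb (mem_support_iff.mpr hc)
      simp [Finset.mem_filter, hb, hcb]
  have sum_Cw : ∀ f : MvPolynomial (Fin (n + 1)) k, ∑ μ ∈ f.support.image w, Cw μ f = f := by
    intro f
    apply MvPolynomial.ext
    intro b
    rw [coeff_sum]
    simp only [coeff_Cw]
    rw [Finset.sum_ite_eq (f.support.image w) (w b) (fun _ => coeff b f)]
    by_cases hb : b ∈ f.support
    · simp [Finset.mem_image_of_mem w hb]
    · have hcb : coeff b f = 0 := by
        by_contra hc
        exact hb (mem_support_iff.mpr hc)
      simp [hcb]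
  -- how σ acts on monomials
  have sigma_monomial : ∀ (a : Fin (n + 1) →₀ ℕ) (c : k),
      σ (monomial a c) = monomial a (w a * c) := by
    intro a c
    rw [monomial_eq, monomial_eq, Finsupp.prod_pow]
    have hC : σ (C c) = C c := by
      have := σ.commutes c
      simpa [MvPolynomial.algebraMap_eq] using this
    rw [map_mul, hC, map_prod]
    simp only [map_pow, hσ, smul_eq_C_mul, mul_pow]
    simp only [← C_pow]
    rw [Finset.prod_mul_distrib,
      ← map_prod (C : k →+* MvPolynomial (Fin (n + 1)) k)  (fun x => lam x ^ a x) Finset.univ, hw]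
    simp only [C_mul]
    ring
  have sigma_apply : ∀ f : MvPolynomial (Fin (n + 1)) k,
      σ f = ∑ a ∈ f.support, monomial a (w a * coeff a f) := by
    intro f
    conv_lhs => rw [f.as_sum]
    rw [map_sum]
    exact Finset.sum_congr rfl fun a _ => sigma_monomial a _
  have coeff_sigma : ∀ (f : MvPolynomial (Fin (n + 1)) k) b,
      coeff b (σ f) = w b * coeff b f := by
    intro f b
    rw [sigma_apply, coeff_sum]
    simp only [coeff_monomial]
    rw [Finset.sum_ite_eq' f.support b (fun a => w a * coeff a f)]
    by_cases hb : b ∈ f.support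
    · simp [hb]
    · have hcb : coeff b f = 0 := by
        by_contra hc
        exact hb (mem_support_iff.mpr hc)
      simp [hb, hcb]
  have sigmaI : ∀ f ∈ I, σ f ∈ I := by
    intro f hf
    have : σ f ∈ I.map (σ : MvPolynomial (Fin (n + 1)) k →+* MvPolynomial (Fin (n + 1)) k) :=
      Ideal.mem_map_of_mem _ hf
    rwa [hinv] at this
  -- key: all eigencomponents of an element of I lie in I
  have key : ∀ (s : ℕ) (f : MvPolynomial (Fin (n + 1)) k), f ∈ I →
      (f.support.image w).card ≤ s → ∀ μ, Cw μ f ∈ I := by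
    intro s
    induction s with
    | zero =>
      intro f hf hcard μ
      have himg : f.support.image w = ∅ := Finset.card_eq_zero.mp (Nat.le_zero.mp hcard)
      have hsupp : f.support = ∅ := Finset.image_eq_empty.mp himg
      rw [hCw]
      simp [hsupp]
    | succ s ih =>
      intro f hf hcard μ0
      by_cases hle : (f.support.image w).card ≤ s
      · exact ih f hf hle μ0
      have hpos : (f.support.image w).Nonempty := Finset.card_pos.mp (by omega)
      obtain ⟨ν, hν⟩ := hpos
      set g : MvPolynomial (Fin (n + 1)) k := σ f - ν • f with hg
      have hgI : g ∈ I := by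
        refine I.sub_mem (sigmaI f hf) ?_
        rw [smul_eq_C_mul]
        exact I.mul_mem_left _ hf
      have coeff_g : ∀ b, coeff b g = (w b - ν) * coeff b f := by
        intro b
        rw [hg, coeff_sub, coeff_sigma, coeff_smul, smul_eq_mul]
        ring
      have himg_g : g.support.image w ⊆ (f.support.image w).erase ν := by
        intro μ hμ
        obtain ⟨b, hb, rfl⟩ := Finset.mem_image.mp hμ
        have hbne : coeff b g ≠ 0 := mem_support_iff.mp hb
        rw [coeff_g] at hbne
        have h1 : coeff b f ≠ 0 := fun h => hbne (by rw [h, mul_zero])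
        have h2 : w b ≠ ν := fun h => hbne (by rw [h, sub_self, zero_mul])
        exact Finset.mem_erase.mpr ⟨h2, Finset.mem_image_of_mem w (mem_support_iff.mpr h1)⟩
      have hcard_g : (g.support.image w).card ≤ s := by
        have h1 := Finset.card_le_card himg_g
        have h2 : ((f.support.image w).erase ν).card = (f.support.image w).card - 1 :=
          Finset.card_erase_of_mem hν
        omega
      have hgC := ih g hgI hcard_g
      have main : ∀ μ, μ ≠ ν → Cw μ f ∈ I := by
        intro μ hμν
        have heq : Cw μ g = (μ - ν) • Cw μ f := by
          apply MvPolynomial.ext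
          intro b
          rw [coeff_smul, coeff_Cw, coeff_Cw, coeff_g, smul_eq_mul]
          by_cases hb : w b = μ
          · simp [hb]
          · simp [hb]
        have hmem : (μ - ν) • Cw μ f ∈ I := heq ▸ hgC μ
        have h3 : Cw μ f = (μ - ν)⁻¹ • ((μ - ν) • Cw μ f) := by
          rw [smul_smul, inv_mul_cancel₀ (sub_ne_zero.mpr hμν), one_smul]
        rw [h3, smul_eq_C_mul]
        exact I.mul_mem_left _ hmem
      by_cases hμ0 : μ0 = ν
      · subst hμ0
        have hsum := sum_Cw f
        rw [← Finset.add_sum_erase _ _ hν] at hsum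
        have heq : Cw μ0 f = f - ∑ μ ∈ (f.support.image w).erase μ0, Cw μ f :=
          eq_sub_of_add_eq hsum
        rw [heq]
        exact I.sub_mem hf (Ideal.sum_mem I fun μ hμ => main μ (Finset.ne_of_mem_erase hμ))
      · exact main μ0 hμ0
  -- an eigenvector in I lies in J
  have eigen : ∀ (p : MvPolynomial (Fin (n + 1)) k) (μ : k), p ∈ I →
      (∀ a ∈ p.support, w a = μ) → p ∈ J := by
    intro p μ hpI hpw
    by_cases hp0 : p = 0
    · rw [hp0]; exact J.zero_mem
    obtain ⟨a0, ha0⟩ := support_nonempty.mpr hp0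
    -- a common "period" N for the roots of unity among lam 0, …, lam r
    have hNs : ∀ i : Fin (n + 1), ∃ N : ℕ, 1 ≤ N ∧ ((i : ℕ) ≤ r → lam i ^ N = 1) := by
      intro i
      rcases lt_or_ge r (i : ℕ) with h | h
      · exact ⟨1, le_refl 1, fun h' => absurd h' (by omega)⟩
      · rcases Nat.eq_zero_or_pos (i : ℕ) with h0 | h0
        · refine ⟨1, le_refl 1, fun _ => ?_⟩
          have : i = 0 := Fin.ext (by simpa using h0)
          rw [this, hlam0, pow_one]
        · obtain ⟨N, h1, h2⟩ := hroots i h0 h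
          exact ⟨N, h1, fun _ => h2⟩
    choose Nf hNf1 hNf2 using hNs
    set N : ℕ := ∏ i, Nf i with hNdef
    have hNpos : 0 < N := Finset.prod_pos fun i _ => hNf1 i
    have hpowN : ∀ i : Fin (n + 1), (i : ℕ) ≤ r → lam i ^ N = 1 := by
      intro i hi
      obtain ⟨m, hm⟩ := Finset.dvd_prod_of_mem Nf (Finset.mem_univ i)
      have hm' : N = Nf i * m := by rw [hNdef]; exact hm
      rw [hm', pow_mul, hNf2 i hi, one_pow]
    -- exponents beyond r agree across the support of p
    have hexp : ∀ a ∈ p.support, ∀ i : Fin (n + 1), r < (i : ℕ) → a i = a0 i := by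
      intro a ha i hi
      have hweq : w a = w a0 := by rw [hpw a ha, hpw a0 ha0]
      simp only [hw] at hweq
      -- raise to the N-th power
      have hNeq : (∏ j, lam j ^ (N * a j)) = ∏ j, lam j ^ (N * a0 j) := by
        have h1 : ∀ b : Fin (n + 1) →₀ ℕ,
            (∏ j, lam j ^ (N * b j)) = (∏ j, lam j ^ b j) ^ N := by
          intro b
          rw [← Finset.prod_pow]
          exact Finset.prod_congr rfl fun j _ => by rw [← pow_mul, Nat.mul_comm]
        rw [h1, h1, hweq]
      -- the part with index ≤ r is 1
      have hsplit : ∀ b : Fin (n + 1) →₀ ℕ,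
          (∏ j, lam j ^ (N * b j)) =
          ∏ j ∈ Finset.univ.filter (fun j : Fin (n + 1) => r < (j : ℕ)), lam j ^ (N * b j) := by
        intro b
        rw [← Finset.prod_filter_mul_prod_filter_not Finset.univ
          (fun j : Fin (n + 1) => r < (j : ℕ)) (fun j => lam j ^ (N * b j))]
        have hone : (∏ j ∈ Finset.univ.filter (fun j : Fin (n + 1) => ¬ r < (j : ℕ)),
            lam j ^ (N * b j)) = 1 := by
          apply Finset.prod_eq_one
          intro j hj
          have hjr : (j : ℕ) ≤ r := by
            have := (Finset.mem_filter.mp hj).2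
            omega
          rw [pow_mul, hpowN j hjr, one_pow]
        rw [hone, mul_one]
      rw [hsplit a, hsplit a0] at hNeq
      -- integer exponents
      set c : Fin (n + 1) → ℤ := fun j => (N : ℤ) * ((a j : ℤ) - (a0 j : ℤ)) with hc
      have hcz : ∀ j, lam j ^ c j = lam j ^ (N * a j) * (lam j ^ (N * a0 j))⁻¹ := by
        intro j
        have hcj : c j = ((N * a j : ℕ) : ℤ) - ((N * a0 j : ℕ) : ℤ) := by
          rw [hc]; push_cast; ring
        rw [hcj, zpow_sub₀ (lam_ne j), zpow_natCast, zpow_natCast, div_eq_mul_inv]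
      have hprod : (∏ j ∈ Finset.univ.filter (fun j : Fin (n + 1) => r < (j : ℕ)),
          lam j ^ c j) = 1 := by
        calc (∏ j ∈ Finset.univ.filter (fun j : Fin (n + 1) => r < (j : ℕ)), lam j ^ c j)
            = (∏ j ∈ Finset.univ.filter (fun j : Fin (n + 1) => r < (j : ℕ)),
                lam j ^ (N * a j) * (lam j ^ (N * a0 j))⁻¹) :=
              Finset.prod_congr rfl fun j _ => hcz j
          _ = (∏ j ∈ Finset.univ.filter (fun j : Fin (n + 1) => r < (j : ℕ)),
                lam j ^ (N * a j)) *
              (∏ j ∈ Finset.univ.filter (fun j : Fin (n + 1) => r < (j : ℕ)),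
                lam j ^ (N * a0 j))⁻¹ := by
              rw [Finset.prod_mul_distrib, Finset.prod_inv_distrib]
          _ = 1 := by
              rw [hNeq]
              apply mul_inv_cancel₀
              exact Finset.prod_ne_zero_iff.mpr fun j _ => pow_ne_zero _ (lam_ne j)
      have hci := hindep c hprod i hi
      rw [hc] at hci
      have hN0 : (N : ℤ) ≠ 0 := by
        have : N ≠ 0 := by omega
        exact_mod_cast this
      have : (a i : ℤ) - (a0 i : ℤ) = 0 := by
        rcases mul_eq_zero.mp hci with h | h
        · exact absurd h hN0
        · exact h
      omega
    -- factor p as (monomial b 1) * q with q using only variables ≤ r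
    set b : Fin (n + 1) →₀ ℕ := a0.filter (fun i : Fin (n + 1) => r < (i : ℕ)) with hb
    set q : MvPolynomial (Fin (n + 1)) k :=
      ∑ a ∈ p.support, monomial (a.filter (fun i : Fin (n + 1) => ¬ r < (i : ℕ))) (coeff a p)
      with hq
    have hsplit : ∀ a ∈ p.support, b + a.filter (fun i : Fin (n + 1) => ¬ r < (i : ℕ)) = a := by
      intro a ha
      have h1 : a.filter (fun i : Fin (n + 1) => r < (i : ℕ)) = b := by
        rw [hb]
        ext i
        rw [Finsupp.filter_apply, Finsupp.filter_apply]
        by_cases hi : r < (i : ℕ)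
        · simp [hi, hexp a ha i hi]
        · simp [hi]
      conv_rhs => rw [← Finsupp.filter_pos_add_filter_neg a (fun i : Fin (n + 1) => r < (i : ℕ))]
      rw [h1]
    have hpq : monomial b 1 * q = p := by
      rw [hq, Finset.mul_sum]
      conv_rhs => rw [p.as_sum]
      refine Finset.sum_congr rfl fun a ha => ?_
      rw [monomial_mul, one_mul, hsplit a ha]
    have hbI : monomial b (1 : k) ∉ I := by
      intro hmem
      rw [monomial_eq, map_one, one_mul, Finsupp.prod_pow] at hmem
      obtain ⟨i, _, hi⟩ := (Ideal.IsPrime.prod_mem_iff (hp := hprime)).mp hmem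
      exact hX i (hprime.mem_of_pow_mem _ hi)
    have hqI : q ∈ I := by
      have := hpq ▸ hpI
      exact (hprime.mem_or_mem this).resolve_left hbI
    have hqT : q ∈ T := by
      intro j hj
      rw [mem_vars] at hj
      obtain ⟨d, hd, hjd⟩ := hj
      have hcd : coeff d q ≠ 0 := mem_support_iff.mp hd
      rw [hq, coeff_sum] at hcd
      obtain ⟨a, ha, hne'⟩ := Finset.exists_ne_zero_of_sum_ne_zero hcd
      rw [coeff_monomial] at hne'
      have hd' : a.filter (fun i : Fin (n + 1) => ¬ r < (i : ℕ)) = d := by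
        by_contra h
        rw [if_neg h] at hne'
        exact hne' rfl
      rw [← hd', Finsupp.support_filter, Finset.mem_filter] at hjd
      omega
    have hqJ : q ∈ J := Ideal.subset_span ⟨hqI, hqT⟩
    rw [← hpq]
    exact J.mul_mem_left _ hqJ
  -- conclusion
  apply le_antisymm
  · intro f hf
    apply Ideal.le_radical
    have hsum := sum_Cw f
    rw [← hsum]
    refine Ideal.sum_mem J fun μ hμ => ?_
    refine eigen (Cw μ f) μ (key _ f hf (le_refl _) μ) fun a ha => ?_
    have h := mem_support_iff.mp ha
    rw [coeff_Cw] at h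
    by_contra hcon
    simp [hcon] at h
  · calc J.radical ≤ I.radical :=
          Ideal.radical_mono (Ideal.span_le.mpr fun x hx => hx.1)
      _ = I := hprime.radical
end

section
/- Let k be an algebraically closed field of characteristic 0, let n ≥ 1 and 1 ≤ r ≤ n. Let μ_2, …, μ_r ∈ k be roots of unity and let μ_{r+1}, …, μ_n ∈ k be nonzero and multiplicatively independent. Let σ be the k-algebra automorphism of k[x_0, …, x_n] determined by σ(x_0) = x_0, σ(x_1) = x_1 + x_0, and σ(x_i) = μ_i·x_i for 2 ≤ i ≤ n. Let I ⊆ k[x_0, …, x_n] be a homogeneous prime ideal such that σ(I) = I and x_i ∉ I for every 0 ≤ i ≤ n. Then I equals the radical of the ideal generated by I ∩ k[x_0, x_2, …, x_r], i.e., I is, up to radical, generated by polynomials involving only the variables x_0, x_2, …, x_r. -/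
set_option linter.unusedSectionVars false
set_option linter.unusedVariables false
set_option maxHeartbeats 1000000

namespace Statement5Aux

section ExpSum

open Polynomial

variable {k : Type*} [Field k] [CharZero k] {ι : Type*} [DecidableEq ι]




lemma eval_nat_zero_imp (p : k[X]) (h : ∀ m : ℕ, p.eval (m : k) = 0) : p = 0 :=
  p.eq_zero_of_infinite_isRoot
    (Set.infinite_of_injective_forall_mem (f := (Nat.cast : ℕ → k)) Nat.cast_injective
      (fun m => h m))

/-- the system hypothesis -/
def expSum (S : Finset ι) (lam : ι → k) (P : ι → k[X]) : Prop :=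
  ∀ m : ℕ, ∑ s ∈ S, lam s ^ m * (P s).eval (m : k) = 0

lemma expSum_step (S : Finset ι) (lam : ι → k) (P : ι → k[X]) (t : ι)
    (h : expSum S lam P) :
    expSum S lam (fun s => C (lam s) * (P s).comp (X + C 1) - C (lam t) * P s) := by
  intro m
  have h1 := h (m + 1)
  have h2 := h m
  have key : ∑ s ∈ S, lam s ^ m * ((C (lam s) * (P s).comp (X + C 1) - C (lam t) * P s).eval (m : k))
      = (∑ s ∈ S, lam s ^ (m + 1) * (P s).eval ((m + 1 : ℕ) : k))
        - lam t * ∑ s ∈ S, lam s ^ m * (P s).eval ((m : ℕ) : k) := by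
    rw [Finset.mul_sum, ← Finset.sum_sub_distrib]
    refine Finset.sum_congr rfl fun s _ => ?_
    have : ((m + 1 : ℕ) : k) = (m : k) + 1 := by push_cast; ring
    simp only [eval_sub, eval_mul, eval_C, eval_comp, eval_add, eval_X, eval_one, this, pow_succ]
    ring
  rw [key, h1, h2]
  ring

lemma fd_zero (p : k[X]) (hp : p.natDegree = 0) : p.comp (X + C 1) - p = 0 := by
  obtain ⟨a, ha⟩ := Polynomial.natDegree_eq_zero.mp hp
  rw [← ha]
  simp

lemma fd_lt (p : k[X]) (hp : p.natDegree ≠ 0) :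
    (p.comp (X + C 1) - p).natDegree < p.natDegree := by
  have hp0 : p ≠ 0 := fun h => hp (by simp [h])
  have hq : (X + C (1:k)).natDegree = 1 := natDegree_X_add_C 1
  have hco : (p.comp (X + C 1)).natDegree = p.natDegree := by
    rw [natDegree_comp, hq, mul_one]
  have hlc : (p.comp (X + C 1)).leadingCoeff = p.leadingCoeff := by
    rw [leadingCoeff_comp (by rw [hq]; exact one_ne_zero),
      (monic_X_add_C (1:k)).leadingCoeff, one_pow, mul_one]
  have hc0 : p.comp (X + C 1) ≠ 0 := by
    intro h
    apply hp0
    rw [← leadingCoeff_eq_zero, ← hlc, h, leadingCoeff_zero]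
  by_cases hsub : p.comp (X + C 1) - p = 0
  · rw [hsub, natDegree_zero]
    omega
  · have hdeg : (p.comp (X + C 1)).degree = p.degree := by
      rw [degree_eq_natDegree hc0, degree_eq_natDegree hp0, hco]
    have h2 := degree_sub_lt hdeg hc0 hlc
    rw [hdeg, degree_eq_natDegree hp0] at h2
    exact (natDegree_lt_iff_degree_lt hsub).mpr h2

lemma step_ne_zero {a b : k} (hab : a ≠ b) (p : k[X]) (hp : p ≠ 0) :
    C a * p.comp (X + C 1) - C b * p ≠ 0 := by
  have hrw : C a * p.comp (X + C 1) - C b * p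
      = C a * (p.comp (X + C 1) - p) + C (a - b) * p := by rw [map_sub]; ring
  intro h0
  have hcoeff : (C a * (p.comp (X + C 1) - p) + C (a - b) * p).coeff p.natDegree
      = (a - b) * p.leadingCoeff := by
    by_cases hd : p.natDegree = 0
    · rw [fd_zero p hd, mul_zero, zero_add, coeff_C_mul]; rfl
    · rw [coeff_add, coeff_C_mul, coeff_C_mul, coeff_eq_zero_of_natDegree_lt (fd_lt p hd),
        mul_zero, zero_add]; rfl
  rw [← hrw, h0, coeff_zero] at hcoeff
  exact (mul_ne_zero (sub_ne_zero_of_ne hab) (leadingCoeff_ne_zero.mpr hp)) hcoeff.symm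

lemma expSum_drop (S : Finset ι) (lam : ι → k) (P : ι → k[X]) (t : ι)
    (h0 : P t = 0) (h : expSum S lam P) : expSum (S.erase t) lam P := by
  intro m
  rw [Finset.sum_erase _ (by rw [h0]; simp)]
  exact h m

lemma expSum_kill (lam : ι → k) (S : Finset ι) (t : ι) (ht : t ∈ S)
    (hinj : ∀ s ∈ S, lam s = lam t → s = t) :
    ∀ d : ℕ, ∀ P : ι → k[X], (P t = 0 ∨ (P t).natDegree < d) → expSum S lam P →
    ∃ Q : ι → k[X], (∀ s ∈ S.erase t, P s ≠ 0 → Q s ≠ 0) ∧ expSum (S.erase t) lam Q := by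
  intro d
  induction d with
  | zero =>
    intro P hP h
    rcases hP with h0 | h0
    · exact ⟨P, fun s _ hs => hs, expSum_drop S lam P t h0 h⟩
    · omega
  | succ d ih =>
    intro P hP h
    by_cases h0 : P t = 0
    · exact ⟨P, fun s _ hs => hs, expSum_drop S lam P t h0 h⟩
    · set P' : ι → k[X] := fun s => C (lam s) * (P s).comp (X + C 1) - C (lam t) * P s with hP'def
      have hstep := expSum_step S lam P t h
      have hPt : P' t = C (lam t) * ((P t).comp (X + C 1) - P t) := by
        simp only [hP'def, mul_sub]
      have ht' : P' t = 0 ∨ (P' t).natDegree < d := by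
        by_cases hd : (P t).natDegree = 0
        · left; rw [hPt, fd_zero _ hd, mul_zero]
        · right
          calc (P' t).natDegree ≤ ((P t).comp (X + C 1) - P t).natDegree := by
                rw [hPt]; exact natDegree_C_mul_le _ _
            _ < (P t).natDegree := fd_lt _ hd
            _ ≤ d := by
                rcases hP with h1 | h1
                · exact absurd h1 h0
                · omega
      obtain ⟨Q, hQ1, hQ2⟩ := ih P' ht' hstep
      refine ⟨Q, fun s hs hPs => hQ1 s hs ?_, hQ2⟩
      have hst : s ≠ t := Finset.ne_of_mem_erase hs
      exact step_ne_zero (fun e => hst (hinj s (Finset.mem_of_mem_erase hs) e)) (P s) hPs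

lemma expSum_zero (lam : ι → k) :
    ∀ S : Finset ι, (∀ s ∈ S, lam s ≠ 0) → (Set.InjOn lam S) → ∀ P, expSum S lam P →
      ∀ s0 ∈ S, P s0 = 0 := by
  intro S
  induction S using Finset.strongInduction with
  | _ S ih =>
    intro hlam hinj P h s0 hs0
    by_cases hT : ∃ t ∈ S, t ≠ s0
    · obtain ⟨t, htS, hts⟩ := hT
      obtain ⟨Q, hQ1, hQ2⟩ := expSum_kill lam S t htS
        (fun s hs he => hinj hs htS he) ((P t).natDegree + 1) P (Or.inr (Nat.lt_succ_self _)) h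
      by_contra hP0
      have hs0' : s0 ∈ S.erase t := Finset.mem_erase.mpr ⟨fun e => hts e.symm, hs0⟩
      have hQ0 : Q s0 ≠ 0 := hQ1 s0 hs0' hP0
      exact hQ0 (ih (S.erase t) (Finset.erase_ssubset htS)
        (fun s hs => hlam s (Finset.mem_of_mem_erase hs))
        (hinj.mono (fun x hx => Finset.mem_of_mem_erase hx)) Q hQ2 s0 hs0')
    · -- S = {s0}
      push_neg at hT
      have hSsub : S = {s0} := by
        apply Finset.eq_singleton_iff_unique_mem.mpr
        exact ⟨hs0, fun x hx => hT x hx⟩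
      apply eval_nat_zero_imp
      intro m
      have := h m
      rw [hSsub, Finset.sum_singleton] at this
      have hl : lam s0 ^ m ≠ 0 := pow_ne_zero _ (hlam s0 hs0)
      exact (mul_eq_zero.mp this).resolve_left hl

lemma exp_poly_indep {V : Type*} [AddCommGroup V] [Module k V]
    (S : Finset ι) (lam : ι → k) (hlam : ∀ s ∈ S, lam s ≠ 0) (hinj : Set.InjOn lam S)
    (J : ℕ) (v : ι → ℕ → V)
    (h : ∀ m : ℕ, ∑ s ∈ S, ∑ j ∈ Finset.range J, (lam s ^ m * (m : k) ^ j) • v s j = 0) :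
    ∀ s ∈ S, ∀ j ∈ Finset.range J, v s j = 0 := by
  intro s hs j hj
  rw [← Module.forall_dual_apply_eq_zero_iff (R := k)]
  intro φ
  have hzero := expSum_zero lam S hlam hinj
    (fun s => ∑ j ∈ Finset.range J, C (φ (v s j)) * X ^ j) ?_ s hs
  · have := congrArg (fun p => Polynomial.coeff p j) hzero
    simp only [Polynomial.finset_sum_coeff, Polynomial.coeff_C_mul, Polynomial.coeff_X_pow,
      Polynomial.coeff_zero] at this
    rw [Finset.sum_eq_single j (fun b _ hb => by simp [if_neg (Ne.symm hb)])
      (fun hj' => absurd hj hj')] at this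
    simpa using this
  · intro m
    have hm := congrArg φ (h m)
    simp only [map_sum, map_smul, map_zero, smul_eq_mul] at hm
    rw [← hm]
    refine Finset.sum_congr rfl fun s' _ => ?_
    rw [eval_finset_sum, Finset.mul_sum]
    refine Finset.sum_congr rfl fun j' _ => ?_
    simp only [eval_mul, eval_C, eval_pow, eval_X]
    ring


end ExpSum

section MvSide

open MvPolynomial

variable {k : Type*} [Field k] [CharZero k] {n : ℕ}




lemma mem_of_monomial_mul_mem {I : Ideal (MvPolynomial (Fin (n+1)) k)}
    (hprime : I.IsPrime) (hX : ∀ i, X i ∉ I)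
    (e : Fin (n+1) →₀ ℕ) : ∀ q : MvPolynomial (Fin (n+1)) k,
    monomial e 1 * q ∈ I → q ∈ I := by
  induction e using Finsupp.induction with
  | zero =>
    intro q hq
    rwa [MvPolynomial.monomial_zero', MvPolynomial.C_1, one_mul] at hq
  | single_add a b f ha hb ih =>
    intro q hq
    have : monomial (Finsupp.single a b + f) (1 : k) = X a ^ b * monomial f 1 := by
      rw [X_pow_eq_monomial, monomial_mul, one_mul]
    rw [this, mul_assoc] at hq
    rcases hprime.mem_or_mem hq with h | h
    · exact absurd (hprime.mem_of_pow_mem b h) (hX a)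
    · exact ih _ h

lemma C_mul_mem {I : Ideal (MvPolynomial (Fin (n+1)) k)}
    {a : k} (ha : a ≠ 0) {q : MvPolynomial (Fin (n+1)) k}
    (h : C a * q ∈ I) : q ∈ I := by
  have : q = C a⁻¹ * (C a * q) := by
    rw [← mul_assoc, ← C_mul, inv_mul_cancel₀ ha, C_1, one_mul]
  rw [this]
  exact I.mul_mem_left _ h

section Main

variable (r : ℕ) (mu : Fin (n + 1) → k)

/-- exponents on "bad" variables: `x_1` and `x_i` for `i > r` -/
def badP (r : ℕ) (i : Fin (n + 1)) : Prop := (i : ℕ) = 1 ∨ r < (i : ℕ)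

instance : DecidablePred (badP (n := n) r) :=
  fun i => inferInstanceAs (Decidable (_ ∨ _))

/-- the substitution giving `σ^[M]` -/
noncomputable def G (M : ℕ) (i : Fin (n + 1)) : MvPolynomial (Fin (n + 1)) k :=
  if (i : ℕ) = 0 then X i
  else if (i : ℕ) = 1 then X 1 + C (M : k) * X 0
  else C (mu i ^ M) * X i

lemma val_one' (hn : 1 ≤ n) : ((1 : Fin (n + 1)) : ℕ) = 1 := by
  rw [Fin.val_one']
  exact Nat.mod_eq_of_lt (by omega)

lemma G_zero (hn : 1 ≤ n) :
    G mu 0 = fun i : Fin (n + 1) => (X i : MvPolynomial (Fin (n + 1)) k) := by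
  funext i
  unfold G
  split_ifs with h0 h1
  · rfl
  · have hi : i = 1 := Fin.ext (by rw [val_one' hn]; exact h1)
    rw [hi]
    simp
  · rw [pow_zero, C_1, one_mul]

lemma iterate_formula
    (σ : MvPolynomial (Fin (n + 1)) k →ₐ[k] MvPolynomial (Fin (n + 1)) k)
    (hσ0 : σ (X 0) = X 0) (hσ1 : σ (X 1) = X 1 + X 0)
    (hσ : ∀ i : Fin (n + 1), 2 ≤ (i : ℕ) → σ (X i) = mu i • X i)
    (hn : 1 ≤ n)
    (M : ℕ) (f : MvPolynomial (Fin (n + 1)) k) :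
    (⇑σ)^[M] f = aeval (G mu M) f := by
  induction M generalizing f with
  | zero =>
    rw [Function.iterate_zero_apply, G_zero mu hn]
    exact (aeval_X_left_apply f).symm
  | succ M ih =>
    rw [Function.iterate_succ_apply', ih]
    have hcomp : σ (aeval (G mu M) f) = aeval (fun i => σ (G mu M i)) f := by
      rw [← AlgHom.comp_apply, comp_aeval]
    rw [hcomp]
    have hGs : (fun i => σ (G mu M i)) = G mu (M + 1) := by
      funext i
      unfold G
      split_ifs with h0 h1
      · have hi : i = 0 := Fin.ext h0
        rw [hi, hσ0]
      · have hC : ∀ a : k, ∀ p, σ (C a * p) = C a * σ p := by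
          intro a p
          rw [map_mul]
          congr 1
          rw [← MvPolynomial.algebraMap_eq, AlgHom.commutes]
        rw [map_add, hσ1, hC, hσ0]
        have hcast : ((M + 1 : ℕ) : k) = (M : k) + 1 := by push_cast; ring
        rw [hcast, map_add, C_1]
        ring
      · have h2 : 2 ≤ (i : ℕ) := by omega
        have hC : ∀ a : k, ∀ p, σ (C a * p) = C a * σ p := by
          intro a p
          rw [map_mul]
          congr 1
          rw [← MvPolynomial.algebraMap_eq, AlgHom.commutes]
        rw [hC, hσ i h2, smul_eq_C_mul, ← mul_assoc, ← C_mul, pow_succ]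
    rw [hGs]

lemma aeval_G_fixes {M : ℕ}
    (hfix : ∀ i : Fin (n + 1), 2 ≤ (i : ℕ) → (i : ℕ) ≤ r → mu i ^ M = 1)
    (p : MvPolynomial (Fin (n + 1)) k) (hp : ∀ j ∈ p.vars, ¬ badP r j) :
    aeval (G mu M) p = p := by
  conv_lhs => rw [← support_sum_monomial_coeff p]
  rw [map_sum]
  conv_rhs => rw [← support_sum_monomial_coeff p]
  refine Finset.sum_congr rfl fun d hd => ?_
  rw [aeval_monomial, monomial_eq]
  congr 1
  apply Finsupp.prod_congr
  intro i hi
  have hvar : i ∈ p.vars := (mem_vars i).mpr ⟨d, hd, hi⟩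
  have hbad := hp i hvar
  unfold badP at hbad
  push_neg at hbad
  obtain ⟨h1, hr⟩ := hbad
  have hGi : G mu M i = X i := by
    unfold G
    by_cases hc0 : (i : ℕ) = 0
    · rw [if_pos hc0]
    · rw [if_neg hc0, if_neg h1]
      have h2 : 2 ≤ (i : ℕ) := by omega
      rw [hfix i h2 hr, C_1, one_mul]
  rw [hGi]

end Main


/-- coefficient of the bad-monomial `b` -/
noncomputable def hb (r : ℕ) (f : MvPolynomial (Fin (n+1)) k) (b : Fin (n+1) →₀ ℕ) :
    MvPolynomial (Fin (n+1)) k :=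
  ∑ d ∈ f.support.filter (fun d => d.filter (badP r) = b),
    monomial (d.filter (fun i => ¬ badP r i)) (coeff d f)

noncomputable def Bset (r : ℕ) (f : MvPolynomial (Fin (n+1)) k) :
    Finset (Fin (n+1) →₀ ℕ) :=
  f.support.image (fun d => d.filter (badP r))

noncomputable def Lam (mu : Fin (n+1) → k) (N : ℕ) (c : Fin (n+1) →₀ ℕ) : k :=
  ∏ i ∈ c.support, mu i ^ (N * c i)

lemma decomp (r : ℕ) (f : MvPolynomial (Fin (n+1)) k) :
    ∑ b ∈ Bset r f, monomial b 1 * hb r f b = f := by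
  conv_rhs => rw [← support_sum_monomial_coeff f]
  rw [← Finset.sum_fiberwise_of_maps_to
    (fun d hd => Finset.mem_image_of_mem (fun d => d.filter (badP r)) hd)
    (fun d => monomial d (coeff d f))]
  refine Finset.sum_congr rfl fun b hbB => ?_
  unfold hb
  rw [Finset.mul_sum]
  refine Finset.sum_congr rfl fun d hd => ?_
  rw [monomial_mul, one_mul]
  obtain ⟨-, hdb⟩ := Finset.mem_filter.mp hd
  rw [← hdb, Finsupp.filter_pos_add_filter_neg]

lemma hb_vars (r : ℕ) (f : MvPolynomial (Fin (n+1)) k) (b : Fin (n+1) →₀ ℕ) :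
    ∀ j ∈ (hb r f b).vars, ¬ badP r j := by
  intro j hj
  obtain ⟨d', hd', hjd'⟩ := (mem_vars j).mp hj
  have hsub := MvPolynomial.support_sum hd'
  obtain ⟨d, hd, hd'mem⟩ := Finset.mem_biUnion.mp hsub
  have hd'eq : d' = d.filter (fun i => ¬ badP r i) :=
    Finset.mem_singleton.mp (support_monomial_subset hd'mem)
  rw [hd'eq, Finsupp.support_filter] at hjd'
  exact (Finset.mem_filter.mp hjd').2

lemma Bset_bad (r : ℕ) (f : MvPolynomial (Fin (n+1)) k) (b : Fin (n+1) →₀ ℕ)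
    (hbB : b ∈ Bset r f) : ∀ i ∈ b.support, badP r i := by
  obtain ⟨d, _, rfl⟩ := Finset.mem_image.mp hbB
  intro i hi
  rw [Finsupp.support_filter, Finset.mem_filter] at hi
  exact hi.2

lemma erase_support_gt (hn : 1 ≤ n) (r : ℕ) (b : Fin (n+1) →₀ ℕ)
    (hbad : ∀ i ∈ b.support, badP r i) :
    ∀ i ∈ (b.erase 1).support, r < (i : ℕ) := by
  intro i hi
  rw [Finsupp.support_erase, Finset.mem_erase] at hi
  obtain ⟨hne, hmem⟩ := hi
  rcases hbad i hmem with h1 | h2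
  · exact absurd (Fin.ext (by rw [val_one' hn]; exact h1)) hne
  · exact h2

lemma G_of_gt (mu : Fin (n+1) → k) (M : ℕ) (i : Fin (n+1)) (h2 : 2 ≤ (i : ℕ)) :
    G mu M i = C (mu i ^ M) * X i := by
  unfold G
  rw [if_neg (by omega), if_neg (by omega)]

lemma G_of_one (hn : 1 ≤ n) (mu : Fin (n+1) → k) (M : ℕ) :
    G mu M 1 = X 1 + C (M : k) * X 0 := by
  unfold G
  rw [if_neg (by rw [val_one' hn]; omega), if_pos (val_one' hn)]

lemma aeval_G_monomial (hn : 1 ≤ n) {r : ℕ} (hr1 : 1 ≤ r) (mu : Fin (n+1) → k) (N M : ℕ)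
    (b : Fin (n+1) →₀ ℕ) (hbad : ∀ i ∈ b.support, badP r i) :
    aeval (G mu (N * M)) (monomial b (1:k))
      = C (Lam mu N (b.erase 1) ^ M) * ((X 1 + C ((N * M : ℕ) : k) * X 0) ^ (b 1)
          * monomial (b.erase 1) 1) := by
  have hsplit : monomial b (1:k) = X 1 ^ (b 1) * monomial (b.erase 1) 1 := by
    rw [X_pow_eq_monomial, monomial_mul, one_mul, Finsupp.single_add_erase]
  rw [hsplit, map_mul, map_pow, aeval_X, G_of_one hn]
  have hmono : aeval (G mu (N * M)) (monomial (b.erase 1) (1:k))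
      = C (Lam mu N (b.erase 1) ^ M) * monomial (b.erase 1) 1 := by
    rw [aeval_monomial, map_one, one_mul]
    have hgt := erase_support_gt hn r b hbad
    have hprod : ((b.erase 1).prod fun i e => G mu (N * M) i ^ e)
        = C (Lam mu N (b.erase 1) ^ M) * ((b.erase 1).prod fun i e => X i ^ e) := by
      unfold Finsupp.prod
      have step : ∀ i ∈ (b.erase 1).support,
          G mu (N * M) i ^ (b.erase 1) i
            = C ((mu i ^ (N * ((b.erase 1) i))) ^ M) * X i ^ ((b.erase 1) i) := by
        intro i hi
        have h2 : 2 ≤ (i : ℕ) := by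
          have := hgt i hi; omega
        rw [G_of_gt mu _ i h2, mul_pow, ← C_pow]
        congr 2
        rw [← pow_mul, ← pow_mul]
        congr 1
        ring
      have hLam : Lam mu N (b.erase 1) ^ M
          = ∏ x ∈ (b.erase 1).support, (mu x ^ (N * (b.erase 1) x)) ^ M := by
        unfold Lam
        rw [← Finset.prod_pow]
      rw [Finset.prod_congr rfl step, Finset.prod_mul_distrib, ← map_prod, hLam]
    rw [hprod]
    congr 1
    rw [monomial_eq, C_1, one_mul]
  rw [hmono]
  ring

lemma binom_expand (c : k) (b1 D : ℕ) (hD : b1 ≤ D) :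
    ((X 1 + C c * X 0 : MvPolynomial (Fin (n+1)) k)) ^ b1
      = ∑ j ∈ Finset.range (D+1),
          (b1.choose j : k) • (C (c ^ j) * (X 0 ^ j * X 1 ^ (b1 - j))) := by
  have main : ((X 1 + C c * X 0 : MvPolynomial (Fin (n+1)) k)) ^ b1
      = ∑ j ∈ Finset.range (b1+1),
          (b1.choose j : k) • (C (c ^ j) * (X 0 ^ j * X 1 ^ (b1 - j))) := by
    rw [add_comm (X 1), add_pow]
    refine Finset.sum_congr rfl fun j hj => ?_
    rw [smul_eq_C_mul, mul_pow, ← C_pow]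
    have hcast : ((b1.choose j : ℕ) : MvPolynomial (Fin (n+1)) k) = C ((b1.choose j : k)) := by
      rw [C_eq_coe_nat]
    rw [hcast]
    ring
  rw [main]
  exact Finset.sum_subset (Finset.range_subset_range.mpr (by omega)) (fun j hjD hjb => by
    have hlt : b1 < j := by
      simp only [Finset.mem_range] at hjD hjb
      omega
    rw [Nat.choose_eq_zero_of_lt hlt]
    simp)


lemma smul_mem' {I : Ideal (MvPolynomial (Fin (n+1)) k)} (a : k)
    {x : MvPolynomial (Fin (n+1)) k} (hx : x ∈ I) : a • x ∈ I := by
  rw [smul_eq_C_mul]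
  exact I.mul_mem_left _ hx

lemma per_b (hn : 1 ≤ n) {r : ℕ} (hr1 : 1 ≤ r) (mu : Fin (n+1) → k) (N M : ℕ)
    (hNroot : ∀ i : Fin (n+1), 2 ≤ (i : ℕ) → (i : ℕ) ≤ r → mu i ^ N = 1)
    (f : MvPolynomial (Fin (n+1)) k) (b : Fin (n+1) →₀ ℕ) (hbB : b ∈ Bset r f)
    (D : ℕ) (hD : b 1 ≤ D) :
    aeval (G mu (N * M)) (monomial b 1 * hb r f b)
      = ∑ j ∈ Finset.range (D+1), (Lam mu N (b.erase 1) ^ M * (M : k) ^ j) •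
          (((b 1).choose j : k) • ((N : k) ^ j •
            (X 0 ^ j * X 1 ^ (b 1 - j) * (monomial (b.erase 1) 1 * hb r f b)))) := by
  have hfix : ∀ i : Fin (n+1), 2 ≤ (i : ℕ) → (i : ℕ) ≤ r → mu i ^ (N * M) = 1 := by
    intro i h2 hr
    rw [pow_mul, hNroot i h2 hr, one_pow]
  rw [map_mul, aeval_G_fixes r mu hfix (hb r f b) (hb_vars r f b),
    aeval_G_monomial hn hr1 mu N M b (Bset_bad r f b hbB),
    binom_expand _ _ D hD]
  rw [Finset.sum_mul, Finset.mul_sum, Finset.sum_mul]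
  refine Finset.sum_congr rfl fun j hj => ?_
  simp only [smul_eq_C_mul, Nat.cast_mul, C_mul, C_pow]
  ring

lemma Lam_ne_zero {r : ℕ} (mu : Fin (n+1) → k)
    (hne : ∀ i : Fin (n + 1), r < (i : ℕ) → mu i ≠ 0) (N : ℕ)
    (c : Fin (n+1) →₀ ℕ) (hc : ∀ i ∈ c.support, r < (i : ℕ)) :
    Lam mu N c ≠ 0 := by
  unfold Lam
  exact Finset.prod_ne_zero_iff.mpr fun i hi => pow_ne_zero _ (hne i (hc i hi))

lemma Lam_eq_prod_filter {r : ℕ} (mu : Fin (n+1) → k) (N : ℕ)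
    (c : Fin (n+1) →₀ ℕ) (hc : ∀ i ∈ c.support, r < (i : ℕ)) :
    Lam mu N c = ∏ i ∈ Finset.univ.filter (fun i : Fin (n+1) => r < (i : ℕ)), mu i ^ (N * c i) := by
  unfold Lam
  refine Finset.prod_subset (fun i hi => Finset.mem_filter.mpr ⟨Finset.mem_univ i, hc i hi⟩) ?_
  intro i _ hi
  rw [Finsupp.notMem_support_iff.mp hi, mul_zero, pow_zero]

lemma Lam_injOn {r N : ℕ} (hN : 1 ≤ N) (mu : Fin (n+1) → k)
    (hne : ∀ i : Fin (n + 1), r < (i : ℕ) → mu i ≠ 0)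
    (hindep : ∀ c : Fin (n + 1) → ℤ,
      (∏ i ∈ Finset.univ.filter (fun i : Fin (n + 1) => r < (i : ℕ)), mu i ^ c i) = 1 →
      ∀ i : Fin (n + 1), r < (i : ℕ) → c i = 0)
    (c c' : Fin (n+1) →₀ ℕ) (hc : ∀ i ∈ c.support, r < (i : ℕ))
    (hc' : ∀ i ∈ c'.support, r < (i : ℕ)) (heq : Lam mu N c = Lam mu N c') : c = c' := by
  have key : ∀ i : Fin (n+1), r < (i : ℕ) → ((N * c i : ℕ) : ℤ) - ((N * c' i : ℕ) : ℤ) = 0 := by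
    apply hindep
    have hprod : (∏ i ∈ Finset.univ.filter (fun i : Fin (n+1) => r < (i : ℕ)),
        mu i ^ (((N * c i : ℕ) : ℤ) - ((N * c' i : ℕ) : ℤ)))
        = (∏ i ∈ Finset.univ.filter (fun i : Fin (n+1) => r < (i : ℕ)), mu i ^ (N * c i)) /
          (∏ i ∈ Finset.univ.filter (fun i : Fin (n+1) => r < (i : ℕ)), mu i ^ (N * c' i)) := by
      rw [← Finset.prod_div_distrib]
      refine Finset.prod_congr rfl fun i hi => ?_
      have hmu : mu i ≠ 0 := hne i (Finset.mem_filter.mp hi).2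
      rw [zpow_sub₀ hmu, zpow_natCast, zpow_natCast]
    rw [hprod, ← Lam_eq_prod_filter mu N c hc, ← Lam_eq_prod_filter mu N c' hc', heq]
    exact div_self (Lam_ne_zero mu hne N c' hc')
  ext i
  by_cases hi : r < (i : ℕ)
  · have := key i hi
    have hNc : N * c i = N * c' i := by omega
    have : c i = c' i := by
      rcases Nat.eq_zero_or_pos N with h0 | h0
      · omega
      · exact Nat.eq_of_mul_eq_mul_left h0 hNc
    exact this
  · have h1 : c i = 0 := by
      by_contra h
      exact hi (hc i (Finsupp.mem_support_iff.mpr h))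
    have h2 : c' i = 0 := by
      by_contra h
      exact hi (hc' i (Finsupp.mem_support_iff.mpr h))
    rw [h1, h2]

noncomputable def wvec (r : ℕ) (f : MvPolynomial (Fin (n+1)) k) (N : ℕ)
    (c : Fin (n+1) →₀ ℕ) (j : ℕ) : MvPolynomial (Fin (n+1)) k :=
  ∑ b ∈ (Bset r f).filter (fun b' => b'.erase 1 = c),
    ((b 1).choose j : k) • ((N : k) ^ j • (X 0 ^ j * X 1 ^ (b 1 - j) * (monomial c 1 * hb r f b)))

end MvSide



end Statement5Aux


open Statement5Aux


open MvPolynomial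

/-- ideal-theoretic form of Lemma 3.1(2) of the paper.
Let `k` be algebraically closed of characteristic 0, `n ≥ 1`, `1 ≤ r ≤ n`.
Let `μ 2, …, μ r` be roots of unity, `μ (r+1), …, μ n` nonzero and multiplicatively
independent, and let `σ` be the `k`-algebra automorphism of `k[x_0, …, x_n]` with
`σ x_0 = x_0`, `σ x_1 = x_1 + x_0`, and `σ x_i = μ i • x_i` for `2 ≤ i`.  If `I` is a
homogeneous prime ideal with `σ(I) = I` and `x i ∉ I` for all `i`, then `I` equals the
radical of the ideal generated by its elements involving only the variables
`x_0, x_2, …, x_r`. -/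
theorem statement5 {k : Type*} [Field k] [CharZero k] [IsAlgClosed k]
    (n r : ℕ) (hn : 1 ≤ n) (hr1 : 1 ≤ r) (hrn : r ≤ n)
    (mu : Fin (n + 1) → k)
    (hroots : ∀ i : Fin (n + 1), 2 ≤ (i : ℕ) → (i : ℕ) ≤ r → ∃ N : ℕ, 1 ≤ N ∧ mu i ^ N = 1)
    (hne : ∀ i : Fin (n + 1), r < (i : ℕ) → mu i ≠ 0)
    (hindep : ∀ c : Fin (n + 1) → ℤ,
      (∏ i ∈ Finset.univ.filter (fun i : Fin (n + 1) => r < (i : ℕ)), mu i ^ c i) = 1 →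
      ∀ i : Fin (n + 1), r < (i : ℕ) → c i = 0)
    (σ : MvPolynomial (Fin (n + 1)) k →ₐ[k] MvPolynomial (Fin (n + 1)) k)
    (hσ0 : σ (X 0) = X 0) (hσ1 : σ (X 1) = X 1 + X 0)
    (hσ : ∀ i : Fin (n + 1), 2 ≤ (i : ℕ) → σ (X i) = mu i • X i)
    (I : Ideal (MvPolynomial (Fin (n + 1)) k)) (hprime : I.IsPrime)
    (hhom : ∃ S : Set (MvPolynomial (Fin (n + 1)) k),
      (∀ p ∈ S, ∃ d : ℕ, p.IsHomogeneous d) ∧ I = Ideal.span S)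
    (hinv : I.map (σ : MvPolynomial (Fin (n + 1)) k →+* MvPolynomial (Fin (n + 1)) k) = I)
    (hX : ∀ i : Fin (n + 1), X i ∉ I) :
    I = (Ideal.span ((I : Set (MvPolynomial (Fin (n + 1)) k)) ∩
          {p | ∀ j ∈ p.vars, (j : ℕ) ≠ 1 ∧ (j : ℕ) ≤ r})).radical := by
    classical
  -- construct an exponent killing all roots of unity among μ_2, ..., μ_r
  set Ni : Fin (n + 1) → ℕ := fun i =>
    if h : 2 ≤ (i : ℕ) ∧ (i : ℕ) ≤ r then (hroots i h.1 h.2).choose else 1 with hNi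
  have hNipos : ∀ i, 1 ≤ Ni i := by
    intro i
    rw [hNi]
    dsimp only
    split_ifs with h
    · exact (hroots i h.1 h.2).choose_spec.1
    · exact le_refl 1
  set N : ℕ := ∏ i : Fin (n + 1), Ni i with hNdef
  have hN : 1 ≤ N := Finset.one_le_prod' (fun i _ => hNipos i)
  have hNroot : ∀ i : Fin (n + 1), 2 ≤ (i : ℕ) → (i : ℕ) ≤ r → mu i ^ N = 1 := by
    intro i h2 hr
    have hsplit : N = Ni i * ∏ j ∈ Finset.univ.erase i, Ni j :=
      (Finset.mul_prod_erase Finset.univ Ni (Finset.mem_univ i)).symm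
    have hNii : mu i ^ Ni i = 1 := by
      rw [hNi]
      dsimp only
      rw [dif_pos ⟨h2, hr⟩]
      exact (hroots i h2 hr).choose_spec.2
    rw [hsplit, pow_mul, hNii, one_pow]
  have hNk : (N : k) ≠ 0 := Nat.cast_ne_zero.mpr (by omega)
  -- σ-stability of I
  have hσI : ∀ g ∈ I, σ g ∈ I := by
    intro g hg
    rw [← hinv]
    exact Ideal.mem_map_of_mem _ hg
  have hiter : ∀ M : ℕ, ∀ g ∈ I, aeval (G mu M) g ∈ I := by
    intro M g hg
    rw [← iterate_formula mu σ hσ0 hσ1 hσ hn M g]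
    induction M with
    | zero => simpa using hg
    | succ M ih => rw [Function.iterate_succ_apply']; exact hσI _ ih
  apply le_antisymm
  · -- main inclusion
    intro f hf
    apply Ideal.le_radical
    have hCsupp : ∀ c ∈ (Bset r f).image (Finsupp.erase 1), ∀ i ∈ c.support, r < (i : ℕ) := by
      intro c hc
      obtain ⟨b, hbB, rfl⟩ := Finset.mem_image.mp hc
      exact erase_support_gt hn r b (Bset_bad r f b hbB)
    set D := (Bset r f).sup (fun b => b 1) with hDdef
    set Cs := (Bset r f).image (Finsupp.erase 1) with hCdef
    -- expansion of the iterated automorphism applied to f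
    have hexp : ∀ M : ℕ, aeval (G mu (N * M)) f
        = ∑ c ∈ Cs, ∑ j ∈ Finset.range (D + 1),
            (Lam mu N c ^ M * (M : k) ^ j) • wvec r f N c j := by
      intro M
      conv_lhs => rw [← decomp r f]
      rw [map_sum]
      rw [← Finset.sum_fiberwise_of_maps_to (g := Finsupp.erase 1)
        (fun b hbB => Finset.mem_image_of_mem _ hbB)
        (fun b => aeval (G mu (N * M)) (monomial b 1 * hb r f b))]
      refine Finset.sum_congr rfl fun c hc => ?_
      unfold wvec
      simp only [Finset.smul_sum]
      rw [Finset.sum_comm]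
      refine Finset.sum_congr rfl fun b hbfib => ?_
      obtain ⟨hbB, hbe⟩ := Finset.mem_filter.mp hbfib
      rw [per_b hn hr1 mu N M hNroot f b hbB D (Finset.le_sup (f := fun b => b 1) hbB), hbe]
    -- extract each vector
    have hw : ∀ c ∈ Cs, ∀ j ∈ Finset.range (D + 1), wvec r f N c j ∈ I := by
      have hmem : ∀ M : ℕ, (∑ c ∈ Cs, ∑ j ∈ Finset.range (D + 1),
          (Lam mu N c ^ M * (M : k) ^ j) • wvec r f N c j) ∈ I := by
        intro M
        rw [← hexp M]
        exact hiter (N * M) f hf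
      have hq : ∀ M : ℕ, ∑ c ∈ Cs, ∑ j ∈ Finset.range (D + 1),
          (Lam mu N c ^ M * (M : k) ^ j) • (Ideal.Quotient.mkₐ k I (wvec r f N c j)) = 0 := by
        intro M
        have h0 : Ideal.Quotient.mkₐ k I (∑ c ∈ Cs, ∑ j ∈ Finset.range (D + 1),
            (Lam mu N c ^ M * (M : k) ^ j) • wvec r f N c j) = 0 := by
          rw [Ideal.Quotient.mkₐ_eq_mk, Ideal.Quotient.eq_zero_iff_mem]
          exact hmem M
        simp only [map_sum, map_smul] at h0
        exact h0
      intro c hc j hj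
      have hz := exp_poly_indep Cs (Lam mu N)
        (fun c hc => Lam_ne_zero mu hne N c (hCsupp c hc))
        (fun c hc c' hc' he => Lam_injOn hN mu hne hindep c c'
          (hCsupp c (Finset.mem_coe.mp hc)) (hCsupp c' (Finset.mem_coe.mp hc')) he)
        (D + 1) (fun c j => Ideal.Quotient.mkₐ k I (wvec r f N c j)) hq c hc j hj
      rwa [Ideal.Quotient.mkₐ_eq_mk, Ideal.Quotient.eq_zero_iff_mem] at hz
    -- downward induction on the x₁-degree
    have hbI : ∀ b ∈ Bset r f, hb r f b ∈ I := by
      have hdown : ∀ t : ℕ, ∀ b ∈ Bset r f, D + 1 ≤ t + b 1 → hb r f b ∈ I := by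
        intro t
        induction t with
        | zero =>
          intro b hbB hle
          have hDb : b 1 ≤ D := Finset.le_sup (f := fun b => b 1) hbB
          omega
        | succ t ih =>
          intro b hbB hle
          have hcC : b.erase 1 ∈ Cs := Finset.mem_image_of_mem _ hbB
          have hjD : b 1 ∈ Finset.range (D + 1) := by
            rw [Finset.mem_range]
            have hDb : b 1 ≤ D := Finset.le_sup (f := fun b => b 1) hbB
            omega
          have hwcj := hw (b.erase 1) hcC (b 1) hjD
          have hbfib : b ∈ (Bset r f).filter (fun b' => b'.erase 1 = b.erase 1) :=
            Finset.mem_filter.mpr ⟨hbB, rfl⟩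
          unfold wvec at hwcj
          rw [← Finset.add_sum_erase _ _ hbfib] at hwcj
          have hrest : (∑ b' ∈ ((Bset r f).filter (fun b' => b'.erase 1 = b.erase 1)).erase b,
              ((b' 1).choose (b 1) : k) • ((N : k) ^ (b 1) •
                (X 0 ^ (b 1) * X 1 ^ (b' 1 - b 1) * (monomial (b.erase 1) 1 * hb r f b')))) ∈ I := by
            apply Ideal.sum_mem
            intro b' hb'
            obtain ⟨hb'ne, hb'fib⟩ := Finset.mem_erase.mp hb'
            obtain ⟨hb'B, hb'e⟩ := Finset.mem_filter.mp hb'fib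
            rcases Nat.lt_trichotomy (b' 1) (b 1) with hlt | heq | hgt
            · rw [Nat.choose_eq_zero_of_lt hlt]
              simp only [Nat.cast_zero, zero_smul]
              exact I.zero_mem
            · exfalso
              apply hb'ne
              have h1 := Finsupp.single_add_erase 1 b'
              have h2 := Finsupp.single_add_erase 1 b
              rw [← h1, ← h2, hb'e, heq]
            · have hmem := ih b' hb'B (by omega)
              exact smul_mem' _ (smul_mem' _ (I.mul_mem_left _ (I.mul_mem_left _ hmem)))
          have hbterm := (Ideal.add_mem_iff_left I hrest).mp hwcj
          rw [Nat.choose_self, Nat.cast_one, one_smul, smul_eq_C_mul] at hbterm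
          have h1 : X 0 ^ (b 1) * X 1 ^ (b 1 - b 1) * (monomial (b.erase 1) 1 * hb r f b) ∈ I :=
            C_mul_mem (pow_ne_zero _ hNk) hbterm
          rw [Nat.sub_self, pow_zero, mul_one, X_pow_eq_monomial, ← mul_assoc,
            monomial_mul, one_mul] at h1
          exact mem_of_monomial_mul_mem hprime hX _ _ h1
      intro b hbB
      exact hdown (D + 1) b hbB (by omega)
    -- conclude
    have hfd : f = ∑ b ∈ Bset r f, monomial b 1 * hb r f b := (decomp r f).symm
    rw [hfd]
    apply Ideal.sum_mem
    intro b hbB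
    apply Ideal.mul_mem_left
    apply Ideal.subset_span
    refine ⟨hbI b hbB, ?_⟩
    intro j hj
    have hbj := hb_vars r f b j hj
    unfold badP at hbj
    push_neg at hbj
    exact ⟨hbj.1, by omega⟩
  · -- easy inclusion
    have hle1 : Ideal.span ((I : Set (MvPolynomial (Fin (n + 1)) k)) ∩
        {p | ∀ j ∈ p.vars, (j : ℕ) ≠ 1 ∧ (j : ℕ) ≤ r}) ≤ I :=
      Ideal.span_le.mpr Set.inter_subset_left
    exact le_trans (Ideal.radical_mono hle1) (le_of_eq hprime.radical)
end
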